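/- arXiv:1612.04766 — 7 statements merged into one kernel-verified Lean document; each statement's English description precedes it below -/
import Mathlib

section
/- Let (A,B) be a suitable pair of k-tuples with compound sequence (g_0,...,g_k). For each integer n and each index 0≤j≤k, there is a unique expression n = Σ_{i=0}^k n_i·g_i with n_i integers satisfying 0 ≤ n_i < b_{i+1} for 0 ≤ i < j and 0 ≤ n_i < a_i for j < i ≤ k (n_j unrestricted). -/
open Finset

/-- The compound sequence: `g k A B i = b₁⋯bᵢ · aᵢ₊₁⋯a_k` (0-indexed: `A j = a_{j+1}`,
`B j = b_{j+1}`). -/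
def compoundSeq (k : ℕ) (A B : ℕ → ℕ) (i : ℕ) : ℕ :=
  (∏ j ∈ Finset.range i, B j) * (∏ j ∈ Finset.Ico i k, A j)

lemma key (a g n : ℤ) (ha : 0 < a) (h : IsCoprime g a) :
    ∃! e : ℤ, (0 ≤ e ∧ e < a) ∧ a ∣ n - e * g := by
  obtain ⟨u, v, huv⟩ := h.symm
  have hcop : IsCoprime a g := ⟨u, v, huv⟩
  refine ⟨(n * v) % a, ⟨⟨Int.emod_nonneg _ ha.ne', Int.emod_lt_of_pos _ ha⟩, ?_⟩, ?_⟩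
  · have h1 : a ∣ n * v - (n * v) % a := Int.dvd_self_sub_of_emod_eq rfl
    have h2 : n - ((n * v) % a) * g = (n * v - (n * v) % a) * g + n * (u * a) := by
      linear_combination (-n) * huv
    rw [h2]
    exact dvd_add (h1.mul_right g) ⟨n * u, by ring⟩
  · rintro e' ⟨⟨h0, h1⟩, t, ht⟩
    have h1' : a ∣ n * v - (n * v) % a := Int.dvd_self_sub_of_emod_eq rfl
    have h2 : a ∣ ((n * v) % a - e') * g := by
      have heq : ((n * v) % a - e') * g = (n - e' * g) - (n - ((n * v) % a) * g) := by ring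
      rw [heq, ht]
      refine dvd_sub ⟨t, rfl⟩ ?_
      have h2' : n - ((n * v) % a) * g = (n * v - (n * v) % a) * g + n * (u * a) := by
        linear_combination (-n) * huv
      rw [h2']
      exact dvd_add (h1'.mul_right g) ⟨n * u, by ring⟩
    have h3 : a ∣ (n * v) % a - e' := hcop.dvd_of_dvd_mul_right h2
    have h4 := Int.eq_zero_of_abs_lt_dvd h3 ?_
    · omega
    · have := Int.emod_nonneg (n * v) ha.ne'
      have := Int.emod_lt_of_pos (n * v) ha
      rw [abs_lt]; omega

lemma cs_top (k : ℕ) (A B : ℕ → ℕ) (i : ℕ) (h : i ≤ k) :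
    compoundSeq (k + 1) A B i = compoundSeq k A B i * A k := by
  unfold compoundSeq
  rw [Finset.prod_Ico_succ_top h]; ring

lemma cs_last (k : ℕ) (A B : ℕ → ℕ) :
    compoundSeq (k + 1) A B (k + 1) = ∏ j ∈ Finset.range (k + 1), B j := by
  unfold compoundSeq
  rw [Finset.Ico_self, Finset.prod_empty, mul_one]

lemma cs_zero (k : ℕ) (A B : ℕ → ℕ) :
    compoundSeq k A B 0 = ∏ j ∈ Finset.range k, A j := by
  unfold compoundSeq
  rw [Finset.prod_range_zero, one_mul, ← Finset.range_eq_Ico]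

lemma cs_succ (k : ℕ) (A B : ℕ → ℕ) (i : ℕ) :
    compoundSeq (k + 1) A B (i + 1)
      = B 0 * compoundSeq k (fun l => A (l + 1)) (fun l => B (l + 1)) i := by
  unfold compoundSeq
  rw [Finset.prod_range_succ']
  have h2 : ∏ j ∈ Finset.Ico (i + 1) (k + 1), A j
      = ∏ j ∈ Finset.Ico i k, A (j + 1) := by
    rw [Finset.prod_Ico_eq_prod_range, Finset.prod_Ico_eq_prod_range]
    simp only [Nat.succ_sub_succ]
    exact Finset.prod_congr rfl fun x _ => by ring_nf
  rw [h2]; ring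

theorem aux : ∀ (k : ℕ) (A B : ℕ → ℕ),
    (∀ i, i < k → 0 < A i) → (∀ i, i < k → 0 < B i) →
    (∀ i j, j ≤ i → i < k → Nat.Coprime (A i) (B j)) →
    ∀ (n : ℤ) (j : ℕ), j ≤ k →
    ∃! c : Fin (k + 1) → ℤ,
      (∀ i : Fin (k + 1), (i : ℕ) < j → 0 ≤ c i ∧ c i < B (i : ℕ)) ∧
      (∀ i : Fin (k + 1), j < (i : ℕ) → 0 ≤ c i ∧ c i < A ((i : ℕ) - 1)) ∧
      n = ∑ i : Fin (k + 1), c i * (compoundSeq k A B (i : ℕ) : ℤ) := by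
  intro k
  induction k with
  | zero =>
    intro A B hA hB hsuit n j hj
    interval_cases j
    refine ⟨fun _ => n, ⟨?_, ?_, ?_⟩, ?_⟩
    · intro i hi; exact absurd hi (by omega)
    · intro i hi; exact absurd hi (by have := i.isLt; omega)
    · simp [compoundSeq]
    · rintro c ⟨-, -, hc⟩
      funext i
      have hi : i = 0 := by omega
      subst hi
      simpa [compoundSeq] using hc.symm
  | succ k IH =>
    intro A B hA hB hsuit n j hj
    rcases Nat.lt_or_ge j (k + 1) with hjk | hjk
    · -- peel off the top coefficient
      have hjk' : j ≤ k := by omega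
      set g : ℤ := ((∏ l ∈ Finset.range (k + 1), B l : ℕ) : ℤ) with hgdef
      have hg : (compoundSeq (k + 1) A B (k + 1) : ℤ) = g := by rw [cs_last]
      have ha : (0 : ℤ) < (A k : ℤ) := by exact_mod_cast hA k (by omega)
      have hcopN : Nat.Coprime (∏ l ∈ Finset.range (k + 1), B l) (A k) :=
        Nat.Coprime.prod_left fun l hl =>
          (hsuit k l (by have := Finset.mem_range.mp hl; omega) (by omega)).symm
      have hcop : IsCoprime g ((A k : ℕ) : ℤ) := by
        rw [hgdef, Nat.isCoprime_iff_coprime]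
        exact hcopN
      obtain ⟨e, ⟨⟨he0, hea⟩, hd⟩, heu⟩ := key ((A k : ℕ) : ℤ) g n ha hcop
      obtain ⟨m, hm⟩ := hd
      obtain ⟨c', ⟨hc'B, hc'A, hc'sum⟩, hc'uniq⟩ :=
        IH A B (fun i hi => hA i (by omega)) (fun i hi => hB i (by omega))
          (fun i l hle hik => hsuit i l hle (by omega)) m j hjk'
      have hGsum : ∀ d : Fin (k + 1) → ℤ,
          ∑ i : Fin (k + 1), d i * (compoundSeq (k + 1) A B (i : ℕ) : ℤ)
            = (∑ i : Fin (k + 1), d i * (compoundSeq k A B (i : ℕ) : ℤ)) * (A k : ℤ) := by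
        intro d
        rw [Finset.sum_mul]
        refine Finset.sum_congr rfl fun i _ => ?_
        rw [cs_top k A B i (by have := i.isLt; omega)]
        push_cast; ring
      refine ⟨Fin.snoc c' e, ⟨?_, ?_, ?_⟩, ?_⟩
      · intro i hi
        have hik : (i : ℕ) < k + 1 := by omega
        have hieq : i = Fin.castSucc ⟨(i : ℕ), hik⟩ := by ext; simp
        rw [hieq, Fin.snoc_castSucc]
        exact hc'B _ hi
      · intro i hi
        rcases Nat.lt_or_ge (i : ℕ) (k + 1) with hik | hik
        · have hieq : i = Fin.castSucc ⟨(i : ℕ), hik⟩ := by ext; simp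
          rw [hieq, Fin.snoc_castSucc]
          exact hc'A _ hi
        · have hieq : i = Fin.last (k + 1) := by
            ext; simp only [Fin.val_last]; have := i.isLt; omega
          rw [hieq, Fin.snoc_last]
          subst hieq
          simp only [Fin.val_last, Nat.add_sub_cancel]
          exact ⟨he0, hea⟩
      · rw [Fin.sum_univ_castSucc]
        simp only [Fin.snoc_castSucc, Fin.snoc_last, Fin.coe_castSucc, Fin.val_last]
        rw [hGsum c', ← hc'sum, hg]
        linarith [hm]
      · rintro d ⟨hdB, hdA, hdsum⟩
        have hdlast := hdA (Fin.last (k + 1)) (by simp only [Fin.val_last]; omega)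
        simp only [Fin.val_last, Nat.add_sub_cancel] at hdlast
        have hsumd : n = (∑ i : Fin (k + 1), d i.castSucc * (compoundSeq k A B (i : ℕ) : ℤ)) * (A k : ℤ)
            + d (Fin.last (k + 1)) * g := by
          rw [hdsum, Fin.sum_univ_castSucc]
          simp only [Fin.coe_castSucc, Fin.val_last]
          rw [hGsum (fun i => d i.castSucc), hg]
        have hdvd : ((A k : ℕ) : ℤ) ∣ n - d (Fin.last (k + 1)) * g :=
          ⟨∑ i : Fin (k + 1), d i.castSucc * (compoundSeq k A B (i : ℕ) : ℤ), by linarith [hsumd]⟩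
        have hde : d (Fin.last (k + 1)) = e := heu _ ⟨⟨hdlast.1, hdlast.2⟩, hdvd⟩
        have hmm : (∑ i : Fin (k + 1), d i.castSucc * (compoundSeq k A B (i : ℕ) : ℤ)) = m := by
          have h1 : (∑ i : Fin (k + 1), d i.castSucc * (compoundSeq k A B (i : ℕ) : ℤ)) * (A k : ℤ)
              = m * (A k : ℤ) := by rw [hde] at hsumd; linarith [hm, hsumd]
          exact mul_right_cancel₀ ha.ne' h1
        have hdc : (fun i : Fin (k + 1) => d i.castSucc) = c' := by
          refine hc'uniq _ ⟨?_, ?_, hmm.symm⟩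
          · intro i hi
            have := hdB i.castSucc (by simpa using hi)
            simpa using this
          · intro i hi
            have := hdA i.castSucc (by simpa using hi)
            simpa using this
        funext i
        refine Fin.lastCases ?_ (fun i' => ?_) i
        · rw [Fin.snoc_last]; exact hde
        · rw [Fin.snoc_castSucc]; exact congrFun hdc i'
    · -- j = k + 1 : peel off the bottom coefficient
      have hje : j = k + 1 := by omega
      subst hje
      set g : ℤ := ((∏ l ∈ Finset.range (k + 1), A l : ℕ) : ℤ) with hgdef
      have hg : (compoundSeq (k + 1) A B 0 : ℤ) = g := by rw [cs_zero]
      have hb : (0 : ℤ) < (B 0 : ℤ) := by exact_mod_cast hB 0 (by omega)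
      have hcopN : Nat.Coprime (∏ l ∈ Finset.range (k + 1), A l) (B 0) :=
        Nat.Coprime.prod_left fun l hl =>
          hsuit l 0 (Nat.zero_le _) (Finset.mem_range.mp hl)
      have hcop : IsCoprime g ((B 0 : ℕ) : ℤ) := by
        rw [hgdef, Nat.isCoprime_iff_coprime]
        exact hcopN
      obtain ⟨e, ⟨⟨he0, heb⟩, hd⟩, heu⟩ := key ((B 0 : ℕ) : ℤ) g n hb hcop
      obtain ⟨m, hm⟩ := hd
      obtain ⟨c', ⟨hc'B, hc'A, hc'sum⟩, hc'uniq⟩ :=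
        IH (fun l => A (l + 1)) (fun l => B (l + 1))
          (fun i hi => hA (i + 1) (by omega)) (fun i hi => hB (i + 1) (by omega))
          (fun i l hle hik => hsuit (i + 1) (l + 1) (by omega) (by omega)) m k le_rfl
      have hGsum : ∀ d : Fin (k + 1) → ℤ,
          ∑ i : Fin (k + 1), d i * (compoundSeq (k + 1) A B ((i : ℕ) + 1) : ℤ)
            = (B 0 : ℤ) * ∑ i : Fin (k + 1), d i *
                (compoundSeq k (fun l => A (l + 1)) (fun l => B (l + 1)) (i : ℕ) : ℤ) := by
        intro d
        rw [Finset.mul_sum]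
        refine Finset.sum_congr rfl fun i _ => ?_
        rw [cs_succ]
        push_cast; ring
      refine ⟨Fin.cons e c', ⟨?_, ?_, ?_⟩, ?_⟩
      · intro i
        refine Fin.cases ?_ (fun i' => ?_) i
        · intro _
          simpa using ⟨he0, heb⟩
        · intro hi
          simp only [Fin.cons_succ, Fin.val_succ] at *
          exact hc'B i' (by omega)
      · intro i hi
        exact absurd hi (by have := i.isLt; omega)
      · rw [Fin.sum_univ_succ]
        simp only [Fin.cons_zero, Fin.cons_succ, Fin.val_zero, Fin.val_succ]
        rw [hGsum c', ← hc'sum, hg]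
        linarith [hm]
      · rintro d ⟨hdB, hdA, hdsum⟩
        have hd0 := hdB 0 (by simp)
        simp only [Fin.val_zero] at hd0
        have hsumd : n = d 0 * g + (B 0 : ℤ) *
            (∑ i : Fin (k + 1), d i.succ *
              (compoundSeq k (fun l => A (l + 1)) (fun l => B (l + 1)) (i : ℕ) : ℤ)) := by
          rw [hdsum, Fin.sum_univ_succ]
          simp only [Fin.val_zero, Fin.val_succ]
          rw [hGsum (fun i => d i.succ), hg]
        have hdvd : ((B 0 : ℕ) : ℤ) ∣ n - d 0 * g :=
          ⟨∑ i : Fin (k + 1), d i.succ *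
              (compoundSeq k (fun l => A (l + 1)) (fun l => B (l + 1)) (i : ℕ) : ℤ),
            by linarith [hsumd]⟩
        have hde : d 0 = e := heu _ ⟨⟨hd0.1, hd0.2⟩, hdvd⟩
        have hmm : (∑ i : Fin (k + 1), d i.succ *
            (compoundSeq k (fun l => A (l + 1)) (fun l => B (l + 1)) (i : ℕ) : ℤ)) = m := by
          have h1 : (B 0 : ℤ) * (∑ i : Fin (k + 1), d i.succ *
              (compoundSeq k (fun l => A (l + 1)) (fun l => B (l + 1)) (i : ℕ) : ℤ))
              = (B 0 : ℤ) * m := by rw [hde] at hsumd; linarith [hm, hsumd]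
          exact mul_left_cancel₀ hb.ne' h1
        have hdc : (fun i : Fin (k + 1) => d i.succ) = c' := by
          refine hc'uniq _ ⟨?_, ?_, hmm.symm⟩
          · intro i hi
            have := hdB i.succ (by simp only [Fin.val_succ]; omega)
            simpa using this
          · intro i hi
            exact absurd hi (by have := i.isLt; omega)
        funext i
        refine Fin.cases ?_ (fun i' => ?_) i
        · rw [Fin.cons_zero]; exact hde
        · rw [Fin.cons_succ]; exact congrFun hdc i'

/-- For each integer `n` and each index `0 ≤ j ≤ k`, there is a unique expression
`n = Σ nᵢ gᵢ` with `0 ≤ nᵢ < b_{i+1}` for `i < j` and `0 ≤ nᵢ < aᵢ` for `j < i ≤ k`. -/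
theorem unique_normal_form (k : ℕ) (A B : ℕ → ℕ)
    (hA : ∀ i, i < k → 0 < A i) (hB : ∀ i, i < k → 0 < B i)
    (hsuit : ∀ i j, j ≤ i → i < k → Nat.Coprime (A i) (B j))
    (n : ℤ) (j : ℕ) (hj : j ≤ k) :
    ∃! c : Fin (k + 1) → ℤ,
      (∀ i : Fin (k + 1), (i : ℕ) < j → 0 ≤ c i ∧ c i < B (i : ℕ)) ∧
      (∀ i : Fin (k + 1), j < (i : ℕ) → 0 ≤ c i ∧ c i < A ((i : ℕ) - 1)) ∧
      n = ∑ i : Fin (k + 1), c i * (compoundSeq k A B (i : ℕ) : ℤ) := by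
  exact aux k A B hA hB hsuit n j hj
end

section
/- Let (A,B) be a suitable pair of k-tuples with compound sequence (g_0,...,g_k), and fix 0≤j≤k. Write n = Σ_{i=0}^k n_i·g_i in the unique normal form with 0≤n_i<b_{i+1} for i<j and 0≤n_i<a_i for i>j. Then n is a positive integer not representable as a nonnegative integer combination of g_0,...,g_k if and only if 1 ≤ −n_j ≤ (Σ_{i≠j} n_i·g_i)/g_j. -/
/-! In the paper's notation, `b_{m+1} g_m = a_{m+1} g_{m+1} = (b_1 ⋯ b_{m+1}) · (a_{m+1} ⋯ a_k)`,
and by suitability the two factors are coprime. If `∑ eᵢ gᵢ = 0`, the first factor divides every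
`gᵢ` with `i > m` and the second every `gᵢ` with `i ≤ m`, so `b_{m+1} g_m` divides the partial sum
`S_m = ∑_{i ≤ m} eᵢ gᵢ = -∑_{i > m} eᵢ gᵢ`.

Let `n = ∑ dᵢ gᵢ` with `dᵢ ≥ 0`, let `c` be the normal form of `n` relative to `j`, and put
`e = d - c`. The normal-form bounds give `S_m > -b_{m+1} g_m` for `m < j`, hence `S_m ≥ 0`
by induction upwards, and `S_m < b_{m+1} g_m` for `j ≤ m`, hence `S_m ≤ 0` by induction
downwards from `S_k = 0`. So `e_j g_j = S_j - S_{j-1} ≤ 0`, i.e. `0 ≤ d_j ≤ c_j`: a normal form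
with `c_j < 0` is not representable, while one with `c_j ≥ 0` plainly is. -/

open Finset

lemma nonneg_of_dvd_of_neg_lt {h x : ℤ} (hdvd : h ∣ x) (hx : -h < x) : 0 ≤ x :=
  le_of_not_gt fun hneg =>
    hneg.ne (Int.eq_zero_of_abs_lt_dvd hdvd (by rw [abs_of_neg hneg]; linarith))

lemma nonpos_of_dvd_of_lt {h x : ℤ} (hdvd : h ∣ x) (hx : x < h) : x ≤ 0 :=
  neg_nonneg.mp (nonneg_of_dvd_of_neg_lt (dvd_neg.mpr hdvd) (neg_lt_neg hx))

section CompoundSeq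

variable {k : ℕ} {A B : ℕ → ℕ}

lemma compoundSeq_pos (hA : ∀ i, i < k → 0 < A i) (hB : ∀ i, i < k → 0 < B i) {i : ℕ}
    (hi : i ≤ k) : 0 < compoundSeq k A B i :=
  Nat.mul_pos (prod_pos fun t ht => hB t (by simp at ht; omega))
    (prod_pos fun t ht => hA t (by simp at ht; omega))

lemma mul_compoundSeq_self (m : ℕ) :
    B m * compoundSeq k A B m = (∏ t ∈ range (m + 1), B t) * ∏ t ∈ Ico m k, A t := by
  rw [compoundSeq, prod_range_succ]
  ring

lemma mul_compoundSeq_succ {m : ℕ} (hm : m < k) :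
    A m * compoundSeq k A B (m + 1) = B m * compoundSeq k A B m := by
  rw [mul_compoundSeq_self, compoundSeq, prod_eq_prod_Ico_succ_bot hm]
  ring

lemma prod_Ico_dvd_compoundSeq {i m : ℕ} (h : i ≤ m) :
    ∏ t ∈ Ico m k, A t ∣ compoundSeq k A B i :=
  Dvd.dvd.mul_left (prod_dvd_prod_of_subset _ _ _ (Ico_subset_Ico_left h)) _

lemma prod_range_dvd_compoundSeq {i m : ℕ} (h : m ≤ i) :
    ∏ t ∈ range m, B t ∣ compoundSeq k A B i :=
  Dvd.dvd.mul_right (prod_dvd_prod_of_subset _ _ _ (range_subset_range.mpr h)) _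

lemma coprime_prod_range_prod_Ico (hsuit : ∀ i j, j ≤ i → i < k → Nat.Coprime (A i) (B j))
    (m : ℕ) : Nat.Coprime (∏ t ∈ range (m + 1), B t) (∏ t ∈ Ico m k, A t) :=
  Nat.Coprime.prod_left fun b hb => Nat.Coprime.prod_right fun a ha =>
    (hsuit a b (by simp at ha hb; omega) (by simp at ha; omega)).symm

-- `partialSum k A B e (m + 1)` is the `S_m` of the sketch above.
variable (k A B) in
def partialSum (e : ℕ → ℤ) (m : ℕ) : ℤ :=
  ∑ i ∈ range m, e i * compoundSeq k A B i

lemma partialSum_zero (e : ℕ → ℤ) : partialSum k A B e 0 = 0 := rfl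

lemma partialSum_succ (e : ℕ → ℤ) (m : ℕ) :
    partialSum k A B e (m + 1) = partialSum k A B e m + e m * compoundSeq k A B m :=
  sum_range_succ _ _

lemma mul_compoundSeq_dvd_partialSum (hsuit : ∀ i j, j ≤ i → i < k → Nat.Coprime (A i) (B j))
    {e : ℕ → ℤ} (he : partialSum k A B e (k + 1) = 0) {m : ℕ} (hm : m ≤ k) :
    (B m : ℤ) * compoundSeq k A B m ∣ partialSum k A B e (m + 1) := by
  have hfactor : (B m : ℤ) * compoundSeq k A B m
      = ((∏ t ∈ range (m + 1), B t : ℕ) : ℤ) * ((∏ t ∈ Ico m k, A t : ℕ) : ℤ) := by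
    exact_mod_cast mul_compoundSeq_self m
  rw [hfactor]
  refine (Nat.isCoprime_iff_coprime.mpr (coprime_prod_range_prod_Ico hsuit m)).mul_dvd ?_ ?_
  · have hsplit := sum_range_add_sum_Ico (fun i => e i * (compoundSeq k A B i : ℤ))
      (Nat.succ_le_succ hm)
    rw [partialSum] at he ⊢
    rw [eq_neg_of_add_eq_zero_left (hsplit.trans he)]
    refine (dvd_sum fun i hi => dvd_mul_of_dvd_right ?_ _).neg_right
    exact Int.natCast_dvd_natCast.mpr (prod_range_dvd_compoundSeq (by simp at hi; omega))
  · refine dvd_sum fun i hi => dvd_mul_of_dvd_right ?_ _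
    exact Int.natCast_dvd_natCast.mpr (prod_Ico_dvd_compoundSeq (by simp at hi; omega))

variable (hA : ∀ i, i < k → 0 < A i) (hB : ∀ i, i < k → 0 < B i)
  (hsuit : ∀ i j, j ≤ i → i < k → Nat.Coprime (A i) (B j))
  {e : ℕ → ℤ} (he : partialSum k A B e (k + 1) = 0) {j : ℕ}

include hA hB hsuit he in
lemma partialSum_nonneg (hj : j ≤ k) (hlo : ∀ i, i < j → -(B i : ℤ) < e i) :
    ∀ m ≤ j, 0 ≤ partialSum k A B e m := by
  intro m hm
  induction m with
  | zero => exact (partialSum_zero e).ge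
  | succ m ih =>
    refine nonneg_of_dvd_of_neg_lt (mul_compoundSeq_dvd_partialSum hsuit he (by omega)) ?_
    have hg : (0 : ℤ) < compoundSeq k A B m := by exact_mod_cast compoundSeq_pos hA hB (by omega)
    have he_m : 0 ≤ e m + B m - 1 := by linarith [hlo m (by omega)]
    rw [partialSum_succ]
    nlinarith [ih (by omega), mul_nonneg he_m hg.le]

include hA hB hsuit he in
lemma partialSum_nonpos (hhi : ∀ i, j ≤ i → i < k → -(A i : ℤ) < e (i + 1)) :
    ∀ m, j ≤ m → m ≤ k → partialSum k A B e (m + 1) ≤ 0 := by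
  intro m hjm hmk
  induction hmk using Nat.decreasingInduction with
  | self => exact he.le
  | of_succ m hmk ih =>
    refine nonpos_of_dvd_of_lt (mul_compoundSeq_dvd_partialSum hsuit he hmk.le) ?_
    have hg : (0 : ℤ) < compoundSeq k A B (m + 1) := by exact_mod_cast compoundSeq_pos hA hB hmk
    have hstep : (A m : ℤ) * compoundSeq k A B (m + 1) = B m * compoundSeq k A B m := by
      exact_mod_cast mul_compoundSeq_succ hmk
    have he_m : 0 ≤ e (m + 1) + A m - 1 := by linarith [hhi m hjm hmk]
    have hnext := ih (by omega)
    rw [partialSum_succ] at hnext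
    nlinarith [mul_nonneg he_m hg.le]

include hA hB hsuit he in
theorem nonpos_of_partialSum_eq_zero (hj : j ≤ k) (hlo : ∀ i, i < j → -(B i : ℤ) < e i)
    (hhi : ∀ i, j ≤ i → i < k → -(A i : ℤ) < e (i + 1)) : e j ≤ 0 := by
  have hbelow := partialSum_nonneg hA hB hsuit he hj hlo j le_rfl
  have habove := partialSum_nonpos hA hB hsuit he hhi j le_rfl hj
  have hg : (0 : ℤ) < compoundSeq k A B j := by exact_mod_cast compoundSeq_pos hA hB hj
  rw [partialSum_succ] at habove
  nlinarith

end CompoundSeq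

open Fin.NatCast in
theorem le_of_sum_eq_sum_of_normalForm {k : ℕ} {A B : ℕ → ℕ}
    (hA : ∀ i, i < k → 0 < A i) (hB : ∀ i, i < k → 0 < B i)
    (hsuit : ∀ i j, j ≤ i → i < k → Nat.Coprime (A i) (B j)) {j : ℕ} (hj : j ≤ k)
    (c : Fin (k + 1) → ℤ) (hc1 : ∀ i : Fin (k + 1), (i : ℕ) < j → c i < B (i : ℕ))
    (hc2 : ∀ i : Fin (k + 1), j < (i : ℕ) → c i < A ((i : ℕ) - 1)) (d : Fin (k + 1) → ℕ)
    (h : ∑ i, c i * (compoundSeq k A B i : ℤ) = ∑ i, (d i : ℤ) * compoundSeq k A B i) :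
    (d ⟨j, by omega⟩ : ℤ) ≤ c ⟨j, by omega⟩ := by
  set e : ℕ → ℤ := fun i => d i - c i
  have hval : ∀ i, i < k + 1 → ((i : Fin (k + 1)) : ℕ) = i := fun i hi => Fin.val_cast_of_lt hi
  have he : partialSum k A B e (k + 1) = 0 := by
    rw [partialSum, ← Fin.sum_univ_eq_sum_range (fun i => e i * compoundSeq k A B i)]
    simp only [e, Fin.cast_val_eq_self, sub_mul, sum_sub_distrib, h, sub_self]
  have hej := nonpos_of_partialSum_eq_zero hA hB hsuit he hj
    (fun i hi => by
      have := hc1 i (by rw [hval i (by omega)]; exact hi)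
      rw [hval i (by omega)] at this
      simp only [e]
      omega)
    (fun i hji hik => by
      have := hc2 (i + 1 : ℕ) (by rw [hval (i + 1) (by omega)]; omega)
      rw [hval (i + 1) (by omega)] at this
      simp only [e, Nat.add_sub_cancel] at this ⊢
      omega)
  have hjf : ((j : ℕ) : Fin (k + 1)) = ⟨j, by omega⟩ := Fin.ext (hval j (by omega))
  simp only [e, hjf] at hej
  omega

/-- An integer `n`, written in the unique normal form relative to index `j`, is a positive
integer not representable as a nonnegative integer combination of the `gᵢ` if and only if
`1 ≤ -n_j ≤ (Σ_{i ≠ j} nᵢ gᵢ)/g_j`. -/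
theorem nonrepresentable_characterization (k : ℕ) (A B : ℕ → ℕ)
    (hA : ∀ i, i < k → 0 < A i) (hB : ∀ i, i < k → 0 < B i)
    (hsuit : ∀ i j, j ≤ i → i < k → Nat.Coprime (A i) (B j))
    (n : ℤ) (j : ℕ) (hj : j ≤ k)
    (c : Fin (k + 1) → ℤ)
    (hc1 : ∀ i : Fin (k + 1), (i : ℕ) < j → 0 ≤ c i ∧ c i < B (i : ℕ))
    (hc2 : ∀ i : Fin (k + 1), j < (i : ℕ) → 0 ≤ c i ∧ c i < A ((i : ℕ) - 1))
    (hn : n = ∑ i : Fin (k + 1), c i * (compoundSeq k A B (i : ℕ) : ℤ)) :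
    (0 < n ∧ ¬ ∃ d : Fin (k + 1) → ℕ,
        n = ∑ i : Fin (k + 1), (d i : ℤ) * (compoundSeq k A B (i : ℕ) : ℤ)) ↔
      (1 ≤ -c ⟨j, by omega⟩ ∧
        (-c ⟨j, by omega⟩) * (compoundSeq k A B j : ℤ) ≤
          ∑ i ∈ Finset.univ.erase (⟨j, by omega⟩ : Fin (k + 1)),
            c i * (compoundSeq k A B (i : ℕ) : ℤ)) := by
  set jf : Fin (k + 1) := ⟨j, by omega⟩
  have hrest : ∑ i ∈ univ.erase jf, c i * (compoundSeq k A B i : ℤ)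
      = n - c jf * compoundSeq k A B j := by
    rw [sum_erase_eq_sub (mem_univ _), hn]
  have hrep : ∀ d : Fin (k + 1) → ℕ,
      n = ∑ i, (d i : ℤ) * compoundSeq k A B i → (d jf : ℤ) ≤ c jf := fun d hd =>
    le_of_sum_eq_sum_of_normalForm hA hB hsuit hj c (fun i hi => (hc1 i hi).2)
      (fun i hi => (hc2 i hi).2) d (hn.symm.trans hd)
  rw [hrest]
  constructor
  · rintro ⟨hpos, hnrep⟩
    refine ⟨?_, by linarith⟩
    by_contra hcj
    have hc : ∀ i, 0 ≤ c i := by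
      intro i
      rcases lt_trichotomy (i : ℕ) j with hi | hi | hi
      · exact (hc1 i hi).1
      · rw [show i = jf from Fin.ext hi]
        omega
      · exact (hc2 i hi).1
    exact hnrep ⟨fun i => (c i).toNat, by simp only [Int.toNat_of_nonneg, hc, hn]⟩
  · rintro ⟨hcj, hn0⟩
    refine ⟨lt_of_le_of_ne (by linarith) fun h0 => ?_, fun ⟨d, hd⟩ => ?_⟩
    · have := hrep 0 (by simp [← h0])
      simp only [Pi.zero_apply, Nat.cast_zero] at this
      omega
    · have := hrep d hd
      omega
end

section
/- Let (A,B) be a suitable pair of k-tuples with compound sequence (g_0,...,g_k). The Frobenius number of the numerical semigroup generated by {g_0,...,g_k} is F = −Σ_{i=0}^k g_i + Σ_{i=1}^k b_1···b_i·a_i···a_k; equivalently, F = a_k·b_1·σ(π_k(A),π_1(B)) − σ(A,B), where σ denotes the sum of the elements of the corresponding compound sequence and π_i deletes the i-th component. -/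
open Finset

/-- `n : ℤ` is representable as a nonnegative integer combination of `g₀,…,g_k`. -/
def RepZ (k : ℕ) (A B : ℕ → ℕ) (n : ℤ) : Prop :=
  ∃ c : Fin (k + 1) → ℕ, n = ∑ i : Fin (k + 1), (c i : ℤ) * (compoundSeq k A B (i : ℕ) : ℤ)

/-! The semigroup generated by `g₀,…,g_{k+1}` is the gluing `a_{k+1} • ⟨g₀,…,g_k⟩ + ℕ g_{k+1}`
(since `gᵢ(k+1) = a_{k+1} gᵢ(k)` for `i ≤ k`), and `g_{k+1} = b_{k+1} g_k(k)` lies in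
`⟨g₀,…,g_k⟩` and is coprime to `a_{k+1}` by suitability. Johnson's gluing formula
`F(a • S + ℕ b) = a F(S) + (a - 1) b` then gives the Frobenius number by induction on `k`,
starting from `F(ℕ) = -1`; the closed formula satisfies the same recursion. -/

theorem Nat.Coprime.exists_lt_int_dvd_sub_mul {a b : ℕ} (hab : Nat.Coprime a b) (ha : 0 < a)
    (m : ℤ) :
    ∃ n : ℕ, n < a ∧ (a : ℤ) ∣ m - n * b := by
  obtain ⟨u, v, huv⟩ := Nat.isCoprime_iff_coprime.mpr hab
  have ha' : (0 : ℤ) < a := by exact_mod_cast ha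
  have hlt := Int.emod_lt_of_pos (m * v) ha'
  refine ⟨(m * v % a).toNat, by omega, ?_⟩
  rw [Int.toNat_of_nonneg (Int.emod_nonneg _ ha'.ne')]
  exact ⟨m * u + m * v / a * b, by linear_combination -m * huv - b * Int.emod_def (m * v) a⟩

theorem isGreatest_compl_of_glue {S : AddSubmonoid ℤ} {T : Set ℤ} {a b : ℕ} {F : ℤ}
    (ha : 0 < a) (hab : Nat.Coprime a b) (hbS : (b : ℤ) ∈ S)
    (hT : ∀ m, m ∈ T ↔ ∃ s ∈ S, ∃ n : ℕ, m = a * s + n * b)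
    (hF : IsGreatest (S : Set ℤ)ᶜ F) :
    IsGreatest Tᶜ (a * F + (a - 1) * b) := by
  have ha' : (0 : ℤ) < a := by exact_mod_cast ha
  constructor
  · intro hmem
    obtain ⟨s, hs, n, hn⟩ := (hT _).mp hmem
    have hdvd : (a : ℤ) ∣ (n + 1) * b := ⟨F - s + b, by linear_combination -hn⟩
    obtain ⟨q, hq⟩ := (Nat.isCoprime_iff_coprime.mpr hab).dvd_of_dvd_mul_right hdvd
    have hq0 : 0 < q := pos_of_mul_pos_right (by omega) ha'.le
    obtain ⟨p, rfl⟩ : ∃ p : ℕ, q = p + 1 := ⟨(q - 1).toNat, by omega⟩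
    have hFs : F = s + p * b :=
      mul_left_cancel₀ ha'.ne' (by linear_combination hn + b * hq)
    exact hF.1 (hFs ▸ add_mem hs (by simpa using nsmul_mem hbS p))
  · intro m hm
    by_contra! hlt
    obtain ⟨n, hn, s, hs⟩ := hab.exists_lt_int_dvd_sub_mul ha m
    refine hm ((hT m).mpr ⟨s, ?_, n, by linarith⟩)
    by_contra hsS
    have hsF : s ≤ F := hF.2 hsS
    have hn' : (n : ℤ) ≤ a - 1 := by omega
    nlinarith [mul_le_mul_of_nonneg_right hn' (Int.natCast_nonneg b)]

section Compound

variable (k : ℕ) (A B : ℕ → ℕ)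

theorem compoundSeq_succ_of_le {i : ℕ} (hi : i ≤ k) :
    compoundSeq (k + 1) A B i = A k * compoundSeq k A B i := by
  rw [compoundSeq, compoundSeq, prod_Ico_succ_top hi]
  ring

theorem compoundSeq_self : compoundSeq k A B k = ∏ j ∈ range k, B j := by
  simp [compoundSeq]

def compoundSemigroup : AddSubmonoid ℤ where
  carrier := {n | RepZ k A B n}
  add_mem' := by
    rintro _ _ ⟨c, rfl⟩ ⟨d, rfl⟩
    exact ⟨c + d, by simp only [Pi.add_apply, Nat.cast_add, add_mul, sum_add_distrib]⟩
  zero_mem' := ⟨0, by simp⟩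

theorem mem_compoundSemigroup {n : ℤ} : n ∈ compoundSemigroup k A B ↔ RepZ k A B n := Iff.rfl

theorem mem_compoundSemigroup_zero {n : ℤ} : n ∈ compoundSemigroup 0 A B ↔ 0 ≤ n := by
  simp only [mem_compoundSemigroup, RepZ, compoundSeq]
  refine ⟨fun ⟨c, hc⟩ => by simp [hc], fun hn => ⟨fun _ => n.toNat, by simp [hn]⟩⟩

theorem mem_compoundSemigroup_succ {m : ℤ} :
    m ∈ compoundSemigroup (k + 1) A B ↔ ∃ s ∈ compoundSemigroup k A B, ∃ n : ℕ,
      m = A k * s + n * (∏ j ∈ range (k + 1), B j : ℕ) := by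
  have hsum (c : Fin (k + 2) → ℕ) :
      ∑ i : Fin (k + 2), (c i : ℤ) * (compoundSeq (k + 1) A B i : ℤ) =
        A k * ∑ i : Fin (k + 1), (c i.castSucc : ℤ) * (compoundSeq k A B i : ℤ) +
          c (Fin.last _) * (∏ j ∈ range (k + 1), B j : ℕ) := by
    rw [Fin.sum_univ_castSucc, mul_sum]
    congr 1
    · refine sum_congr rfl fun i _ => ?_
      rw [Fin.val_castSucc, compoundSeq_succ_of_le k A B (by omega)]
      push_cast
      ring
    · simp [compoundSeq_self]
  constructor
  · rintro ⟨c, rfl⟩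
    exact ⟨_, ⟨fun i => c i.castSucc, rfl⟩, c (Fin.last _), hsum c⟩
  · rintro ⟨_, ⟨c, rfl⟩, n, rfl⟩
    exact ⟨Fin.snoc c n, by simp [hsum]⟩

theorem prod_range_succ_mem_compoundSemigroup :
    ((∏ j ∈ range (k + 1), B j : ℕ) : ℤ) ∈ compoundSemigroup k A B := by
  refine ⟨Pi.single (Fin.last k) (B k), ?_⟩
  simp [Pi.single_apply, compoundSeq_self, prod_range_succ, mul_comm]

def frobeniusFormula : ℤ :=
  -(∑ i ∈ range (k + 1), (compoundSeq k A B i : ℤ)) +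
    ∑ t ∈ range k, ((∏ l ∈ range (t + 1), B l : ℕ) : ℤ) * ((∏ l ∈ Ico t k, A l : ℕ) : ℤ)

theorem frobeniusFormula_zero : frobeniusFormula 0 A B = -1 := by
  simp [frobeniusFormula, compoundSeq]

theorem frobeniusFormula_succ :
    frobeniusFormula (k + 1) A B =
      A k * frobeniusFormula k A B + (A k - 1) * (∏ j ∈ range (k + 1), B j : ℕ) := by
  have hg : ∑ i ∈ range (k + 1), (compoundSeq (k + 1) A B i : ℤ) =
      A k * ∑ i ∈ range (k + 1), (compoundSeq k A B i : ℤ) := by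
    rw [mul_sum]
    refine sum_congr rfl fun i hi => ?_
    rw [compoundSeq_succ_of_le k A B (by simpa [Nat.lt_succ_iff] using hi)]
    push_cast
    ring
  have hP : ∑ t ∈ range k, ((∏ l ∈ range (t + 1), B l : ℕ) : ℤ) *
        ((∏ l ∈ Ico t (k + 1), A l : ℕ) : ℤ) =
      A k * ∑ t ∈ range k, ((∏ l ∈ range (t + 1), B l : ℕ) : ℤ) *
        ((∏ l ∈ Ico t k, A l : ℕ) : ℤ) := by
    rw [mul_sum]
    refine sum_congr rfl fun t ht => ?_
    rw [prod_Ico_succ_top (mem_range.mp ht).le]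
    push_cast
    ring
  rw [frobeniusFormula, frobeniusFormula,
    sum_range_succ (fun i => (compoundSeq (k + 1) A B i : ℤ)), hg,
    sum_range_succ (fun t => ((∏ l ∈ range (t + 1), B l : ℕ) : ℤ) *
      ((∏ l ∈ Ico t (k + 1), A l : ℕ) : ℤ)), hP,
    compoundSeq_self, Nat.Ico_succ_singleton, prod_singleton]
  push_cast
  ring

theorem isGreatest_compl_compoundSemigroup (hA : ∀ i < k, 0 < A i)
    (hsuit : ∀ i j, j ≤ i → i < k → Nat.Coprime (A i) (B j)) :
    IsGreatest (compoundSemigroup k A B : Set ℤ)ᶜ (frobeniusFormula k A B) := by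
  induction k with
  | zero =>
    rw [frobeniusFormula_zero]
    exact ⟨by simp [mem_compoundSemigroup_zero], fun n hn => by
      simp only [Set.mem_compl_iff, SetLike.mem_coe, mem_compoundSemigroup_zero] at hn
      omega⟩
  | succ k ih =>
    rw [frobeniusFormula_succ]
    refine isGreatest_compl_of_glue (hA k k.lt_succ_self)
      (Nat.Coprime.prod_right fun j hj => hsuit k j (by simpa [Nat.lt_succ_iff] using hj)
        k.lt_succ_self)
      (prod_range_succ_mem_compoundSemigroup k A B)
      (fun m => mem_compoundSemigroup_succ k A B)
      (ih (fun i hi => hA i (by omega)) fun i j hji hi => hsuit i j hji (by omega))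

theorem frobeniusFormula_eq_mul_sum_sub :
    frobeniusFormula k A B =
      (A (k - 1) : ℤ) * (B 0 : ℤ) *
          (∑ i ∈ range k, (compoundSeq (k - 1) A (fun l => B (l + 1)) i : ℤ)) -
        ∑ i ∈ range (k + 1), (compoundSeq k A B i : ℤ) := by
  rw [frobeniusFormula, neg_add_eq_sub, mul_sum]
  congr 1
  refine sum_congr rfl fun i hi => ?_
  obtain ⟨m, rfl⟩ : ∃ m, k = m + 1 := ⟨k - 1, by simp at hi; omega⟩
  rw [compoundSeq, Nat.add_sub_cancel, prod_range_succ',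
    prod_Ico_succ_top (by simpa [Nat.lt_succ_iff] using hi)]
  push_cast
  ring

end Compound

theorem frobenius_compound_general (k : ℕ) (A B : ℕ → ℕ)
    (hA : ∀ i, i < k → 0 < A i)
    (hsuit : ∀ i j, j ≤ i → i < k → Nat.Coprime (A i) (B j))
    (F : ℤ)
    (hF : F = -(∑ i ∈ Finset.range (k + 1), (compoundSeq k A B i : ℤ)) +
        ∑ t ∈ Finset.range k,
          ((∏ l ∈ Finset.range (t + 1), B l : ℕ) : ℤ) * ((∏ l ∈ Finset.Ico t k, A l : ℕ) : ℤ)) :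
    -- the alternative form F = a_k·b₁·σ(π_k(A),π_1(B)) − σ(A,B)
    (F = (A (k - 1) : ℤ) * (B 0 : ℤ) *
          (∑ i ∈ Finset.range k, (compoundSeq (k - 1) A (fun l => B (l + 1)) i : ℤ)) -
        ∑ i ∈ Finset.range (k + 1), (compoundSeq k A B i : ℤ)) ∧
    -- F is the Frobenius number: not representable, and every larger integer is
    ¬ RepZ k A B F ∧ (∀ m : ℤ, F < m → RepZ k A B m) := by
  obtain ⟨hnot, hmax⟩ := isGreatest_compl_compoundSemigroup k A B hA hsuit
  rw [← frobeniusFormula] at hF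
  subst hF
  exact ⟨frobeniusFormula_eq_mul_sum_sub k A B, hnot,
    fun m hm => not_not.mp fun h => (hmax h).not_gt hm⟩

/-- The Frobenius number of the numerical semigroup generated by a compound sequence is
`F = −Σ gᵢ + Σ_{i=1}^k b₁⋯bᵢ·aᵢ⋯a_k = a_k·b₁·σ(π_k(A),π_1(B)) − σ(A,B)`. -/
theorem frobenius_compound (k : ℕ) (hk : 1 ≤ k) (A B : ℕ → ℕ)
    (hA : ∀ i, i < k → 0 < A i) (hB : ∀ i, i < k → 0 < B i)
    (hsuit : ∀ i j, j ≤ i → i < k → Nat.Coprime (A i) (B j))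
    (F : ℤ)
    (hF : F = -(∑ i ∈ Finset.range (k + 1), (compoundSeq k A B i : ℤ)) +
        ∑ t ∈ Finset.range k,
          ((∏ l ∈ Finset.range (t + 1), B l : ℕ) : ℤ) * ((∏ l ∈ Finset.Ico t k, A l : ℕ) : ℤ)) :
    -- the alternative form F = a_k·b₁·σ(π_k(A),π_1(B)) − σ(A,B)
    (F = (A (k - 1) : ℤ) * (B 0 : ℤ) *
          (∑ i ∈ Finset.range k, (compoundSeq (k - 1) A (fun l => B (l + 1)) i : ℤ)) -
        ∑ i ∈ Finset.range (k + 1), (compoundSeq k A B i : ℤ)) ∧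
    -- F is the Frobenius number: not representable, and every larger integer is
    ¬ RepZ k A B F ∧ (∀ m : ℤ, F < m → RepZ k A B m) :=
  frobenius_compound_general k A B hA hsuit F hF
end

section
/- Tuenter's identity (k=1 case): for coprime positive integers a,b and any function f on the positive integers, Σ_{n∈NR} (f(n+a) − f(n)) = Σ_{n=1}^{a−1} (f(nb) − f(n)), where NR is the set of positive integers not representable as xa+yb with x,y nonnegative integers. -/
open Finset

/-- Tuenter's identity: for coprime positive `a, b` and any `f` defined on the positive
integers, `Σ_{n ∈ NR} (f(n+a) − f(n)) = Σ_{n=1}^{a−1} (f(nb) − f(n))`, where `NR` is the set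
of positive integers not representable as `xa + yb` with `x, y` nonnegative. -/
theorem tuenter_identity (a b : ℕ) (ha : 0 < a) (hb : 0 < b) (hab : Nat.Coprime a b)
    (f : ℕ → ℝ) (NR : Finset ℕ)
    (hNR : ∀ n : ℕ, n ∈ NR ↔ (0 < n ∧ ¬ ∃ x y : ℕ, n = x * a + y * b)) :
    ∑ n ∈ NR, (f (n + a) - f n) = ∑ n ∈ Finset.Ico 1 a, (f (n * b) - f n) := by
  -- a does not divide i*b for 0 < i < a
  have hndvd : ∀ i : ℕ, 0 < i → i < a → ¬ a ∣ i * b := by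
    intro i h1 h2 hd
    have h3 := hab.dvd_of_dvd_mul_right hd
    have h4 := Nat.le_of_dvd h1 h3
    omega
  -- injectivity of i ↦ i*b % a on Ico 1 a
  have hmodinj : ∀ i ∈ Finset.Ico 1 a, ∀ i' ∈ Finset.Ico 1 a,
      i * b % a = i' * b % a → i = i' := by
    intro i hi i' hi' h
    simp only [Finset.mem_Ico] at hi hi'
    have h2 : i ≡ i' [MOD a] :=
      Nat.ModEq.cancel_right_of_coprime hab h
    calc i = i % a := (Nat.mod_eq_of_lt hi.2).symm
      _ = i' % a := h2
      _ = i' := Nat.mod_eq_of_lt hi'.2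
  -- nonrepresentability of i*b - j*a
  have hnonrep : ∀ i j : ℕ, 1 ≤ i → i < a → 1 ≤ j → j * a < i * b →
      ¬ ∃ x y : ℕ, i * b - j * a = x * a + y * b := by
    rintro i j hi1 hi2 hj hja ⟨x, y, hxy⟩
    have hja' : 0 < j * a := Nat.mul_pos hj ha
    have hyb : y * b ≤ i * b - j * a := by omega
    have hy : y < i := by
      have : y * b < i * b := by omega
      exact Nat.lt_of_mul_lt_mul_right this
    have hib : i * b = x * a + y * b + j * a := by omega
    have h3 : (i - y) * b = (x + j) * a := by
      rw [Nat.sub_mul, Nat.add_mul]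
      omega
    have h4 : a ∣ (i - y) * b := ⟨x + j, by rw [h3]; ring⟩
    exact hndvd (i - y) (by omega) (by omega) h4
  -- the parameter set
  set S : Finset (ℕ × ℕ) :=
    ((Finset.Ico 1 a) ×ˢ (Finset.Ico 1 b)).filter (fun p => p.2 * a < p.1 * b) with hSdef
  have hSmem : ∀ p : ℕ × ℕ, p ∈ S ↔ (1 ≤ p.1 ∧ p.1 < a ∧ 1 ≤ p.2 ∧ p.2 < b ∧ p.2 * a < p.1 * b) := by
    intro p
    simp [hSdef, Finset.mem_filter, Finset.mem_product, Finset.mem_Ico]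
    tauto
  -- NR is the image of S
  have hNReq : NR = S.image (fun p => p.1 * b - p.2 * a) := by
    ext n
    rw [hNR n, Finset.mem_image]
    constructor
    · rintro ⟨hn, hrep⟩
      -- find i with i*b ≡ n [MOD a]
      have hta : 1 ≤ Nat.totient a := Nat.totient_pos.mpr ha  -- might need adjust
      set c : ℕ := b ^ (Nat.totient a - 1) with hc
      set i : ℕ := (n * c) % a with hi
      have hbc : c * b = b ^ Nat.totient a := by
        rw [hc, ← pow_succ]
        congr 1
        omega
      have hmod : i * b ≡ n [MOD a] := by
        calc i * b ≡ (n * c) * b [MOD a] := Nat.ModEq.mul_right b (Nat.mod_modEq _ _)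
          _ = n * (c * b) := by ring
          _ = n * b ^ Nat.totient a := by rw [hbc]
          _ ≡ n * 1 [MOD a] := Nat.ModEq.mul_left n (Nat.ModEq.pow_totient hab.symm)
          _ = n := by ring
      have hia : i < a := Nat.mod_lt _ ha
      have hi1 : 1 ≤ i := by
        rcases Nat.eq_zero_or_pos i with h0 | h0
        · exfalso
          have : n % a = 0 := by
            have := hmod.symm
            rw [h0] at this
            simpa [Nat.ModEq] using this
          exact hrep ⟨n / a, 0, by
            simp [Nat.div_mul_cancel (Nat.dvd_of_mod_eq_zero this)]⟩
        · exact h0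
      have hnlt : n < i * b := by
        by_contra hge
        push_neg at hge
        have hdvd : a ∣ n - i * b := (Nat.modEq_iff_dvd' hge).mp hmod
        obtain ⟨k, hk⟩ := hdvd
        rw [Nat.mul_comm a k] at hk
        exact hrep ⟨k, i, by omega⟩
      have hdvd : a ∣ i * b - n := (Nat.modEq_iff_dvd' hnlt.le).mp hmod.symm
      obtain ⟨k, hk⟩ := hdvd
      rw [Nat.mul_comm a k] at hk
      have hk1 : 1 ≤ k := by
        rcases Nat.eq_zero_or_pos k with h0 | h0
        · rw [h0] at hk; simp at hk; omega
        · exact h0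
      have hval : i * b - k * a = n := by omega
      refine ⟨(i, k), ?_, hval⟩
      rw [hSmem]
      dsimp only
      refine ⟨hi1, hia, hk1, ?_, by omega⟩
      -- k < b
      have hib_lt : i * b < a * b := by
        exact (Nat.mul_lt_mul_right hb).mpr hia
      have : k * a < b * a := by
        calc k * a = i * b - n := by omega
          _ < a * b := by omega
          _ = b * a := by ring
      exact Nat.lt_of_mul_lt_mul_right this
    · rintro ⟨⟨i, j⟩, hp, hpn⟩
      rw [hSmem] at hp
      obtain ⟨h1, h2, h3, h4, h5⟩ := hp
      have hpn' : i * b - j * a = n := hpn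
      subst hpn'
      exact ⟨by omega, hnonrep i j h1 h2 h3 h5⟩
  -- injectivity of the parametrization
  have himg_inj : ∀ p ∈ S, ∀ q ∈ S, p.1 * b - p.2 * a = q.1 * b - q.2 * a → p = q := by
    intro p hp q hq h
    rw [hSmem] at hp hq
    obtain ⟨hp1, hp2, hp3, hp4, hp5⟩ := hp
    obtain ⟨hq1, hq2, hq3, hq4, hq5⟩ := hq
    have hmodp : (p.1 * b - p.2 * a) % a = p.1 * b % a := by
      conv_rhs => rw [show p.1 * b = (p.1 * b - p.2 * a) + p.2 * a by omega]
      rw [Nat.add_mul_mod_self_right]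
    have hmodq : (q.1 * b - q.2 * a) % a = q.1 * b % a := by
      conv_rhs => rw [show q.1 * b = (q.1 * b - q.2 * a) + q.2 * a by omega]
      rw [Nat.add_mul_mod_self_right]
    have h1 : p.1 = q.1 := by
      refine hmodinj p.1 (Finset.mem_Ico.mpr ⟨hp1, hp2⟩) q.1 (Finset.mem_Ico.mpr ⟨hq1, hq2⟩) ?_
      rw [← hmodp, ← hmodq, h]
    have h2 : p.2 = q.2 := by
      rw [h1] at h hp5
      have : p.2 * a = q.2 * a := by omega
      exact Nat.eq_of_mul_eq_mul_right ha this
    exact Prod.ext h1 h2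
  rw [hNReq, Finset.sum_image himg_inj]
  rw [hSdef, Finset.sum_filter, Finset.sum_product]
  have hterm : ∀ i ∈ Finset.Ico 1 a,
      (∑ j ∈ Finset.Ico 1 b, if j * a < i * b then
          (f (i * b - j * a + a) - f (i * b - j * a)) else 0)
        = f (i * b) - f (i * b % a) := by
    intro i hi
    rw [Finset.mem_Ico] at hi
    rw [← Finset.sum_filter]
    have hset : (Finset.Ico 1 b).filter (fun j => j * a < i * b)
        = Finset.Ico 1 (i * b / a + 1) := by
      ext j
      simp only [Finset.mem_filter, Finset.mem_Ico]
      constructor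
      · rintro ⟨⟨h1, h2⟩, h3⟩
        refine ⟨h1, ?_⟩
        rw [Nat.lt_succ_iff, Nat.le_div_iff_mul_le ha]
        omega
      · rintro ⟨h1, h2⟩
        rw [Nat.lt_succ_iff, Nat.le_div_iff_mul_le ha] at h2
        have hne : j * a ≠ i * b := fun h =>
          hndvd i (by omega) hi.2 ⟨j, by rw [← h, Nat.mul_comm]⟩
        have hlt : j * a < i * b := by omega
        have hib : i * b < a * b := (Nat.mul_lt_mul_right hb).mpr hi.2
        have hab' : a * b = b * a := by ring
        have hjb : j < b := by
          refine Nat.lt_of_mul_lt_mul_right (a := a) ?_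
          omega
        exact ⟨⟨h1, hjb⟩, hlt⟩
    rw [hset, Finset.sum_Ico_eq_sum_range]
    have hJ : i * b / a + 1 - 1 = i * b / a := by simp
    rw [hJ]
    have hstep : ∀ k ∈ Finset.range (i * b / a),
        f (i * b - (1 + k) * a + a) - f (i * b - (1 + k) * a)
          = f (i * b - k * a) - f (i * b - (k + 1) * a) := by
      intro k hk
      rw [Finset.mem_range] at hk
      have h1 : (k + 1) * a ≤ i * b := (Nat.le_div_iff_mul_le ha).mp (Nat.succ_le_of_lt hk)
      have hka : (k + 1) * a = k * a + a := by ring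
      have h2 : i * b - (1 + k) * a + a = i * b - k * a := by
        rw [show (1 + k) * a = k * a + a by ring]
        omega
      rw [h2, show (1 + k) * a = (k + 1) * a by ring]
    rw [Finset.sum_congr rfl hstep,
      Finset.sum_range_sub' (fun k => f (i * b - k * a)) (i * b / a)]
    have e0 : i * b - 0 * a = i * b := by omega
    have e1 : i * b - (i * b / a) * a = i * b % a := by
      have := Nat.mod_add_div' (i * b) a
      omega
    rw [e0, e1]
  rw [Finset.sum_congr rfl hterm, Finset.sum_sub_distrib, Finset.sum_sub_distrib]
  congr 1
  refine Finset.sum_bij (fun i _ => i * b % a) ?_ ?_ ?_ ?_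
  · intro i hi
    rw [Finset.mem_Ico] at hi ⊢
    refine ⟨?_, Nat.mod_lt _ ha⟩
    rcases Nat.eq_zero_or_pos (i * b % a) with h0 | h0
    · exact absurd (Nat.dvd_of_mod_eq_zero h0) (hndvd i hi.1 hi.2)
    · exact h0
  · intro x hx y hy h
    exact hmodinj x hx y hy h
  · intro n hn
    have := Finset.surj_on_of_inj_on_of_card_le (s := Finset.Ico 1 a) (t := Finset.Ico 1 a)
      (fun i _ => i * b % a)
      (fun i hi => by
        rw [Finset.mem_Ico] at hi ⊢
        refine ⟨?_, Nat.mod_lt _ ha⟩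
        rcases Nat.eq_zero_or_pos (i * b % a) with h0 | h0
        · exact absurd (Nat.dvd_of_mod_eq_zero h0) (hndvd i hi.1 hi.2)
        · exact h0)
      (fun x y hx hy h => hmodinj x hx y hy h) le_rfl n hn
    obtain ⟨a', ha', heq⟩ := this
    exact ⟨a', ha', heq.symm⟩
  · intro i hi
    rfl
end

section
/- For a suitable pair (A,B), the number of nonrepresentable nonnegative integers satisfies S_0(A,B) = (a_k·b_1·σ(π_k(A),π_1(B)) − σ(A,B) + 1)/2; equivalently, the genus of the numerical semigroup generated by G(A,B) equals (F+1)/2 where F is its Frobenius number, so the semigroup is symmetric. -/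
open Finset

namespace CompoundAux

variable (A B : ℕ → ℕ)

/-- `n` is representable as a nonnegative combination of the compound sequence. -/
def Rep (k : ℕ) (n : ℤ) : Prop :=
  ∃ c : ℕ → ℕ, n = ∑ i ∈ Finset.range (k + 1), (c i : ℤ) * (compoundSeq k A B i : ℤ)

/-- The Frobenius number of the compound semigroup. -/
def Frob (k : ℕ) : ℤ :=
  (∑ i ∈ Finset.range k, ((A i : ℤ) - 1) * (compoundSeq k A B (i + 1) : ℤ)) -
    (compoundSeq k A B 0 : ℤ)

lemma g_succ {k i : ℕ} (hik : i ≤ k) :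
    compoundSeq (k + 1) A B i = compoundSeq k A B i * A k := by
  unfold compoundSeq
  rw [Finset.prod_Ico_succ_top hik]
  ring

lemma g_last (k : ℕ) : compoundSeq k A B k = ∏ j ∈ Finset.range k, B j := by
  unfold compoundSeq
  simp

lemma rep_nonneg {k : ℕ} {n : ℤ} (h : Rep A B k n) : 0 ≤ n := by
  obtain ⟨c, rfl⟩ := h
  exact Finset.sum_nonneg fun i _ => by positivity

lemma rep_zero (k : ℕ) : Rep A B k 0 := ⟨fun _ => 0, by simp⟩

/-- The key recursion: `n = a_k m + c g_k` with `0 ≤ c < a_k` is representable at level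
`k+1` iff `m` is representable at level `k`. -/
lemma rep_rec {k : ℕ} (hApos : 0 < A k)
    (hcop : Nat.Coprime (A k) (∏ j ∈ Finset.range (k + 1), B j))
    {n m c : ℤ} (hc0 : 0 ≤ c) (hca : c < A k)
    (hn : n = (A k : ℤ) * m + c * ((∏ j ∈ Finset.range (k + 1), B j : ℕ) : ℤ)) :
    Rep A B (k + 1) n ↔ Rep A B k m := by
  set G : ℤ := ((∏ j ∈ Finset.range (k + 1), B j : ℕ) : ℤ) with hG
  have hGsplit : G = (B k : ℤ) * (compoundSeq k A B k : ℤ) := by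
    rw [hG, g_last, Finset.prod_range_succ]
    push_cast; ring
  constructor
  · rintro ⟨e, he⟩
    rw [Finset.sum_range_succ] at he
    have hsplit : ∀ i ∈ Finset.range (k + 1),
        (e i : ℤ) * (compoundSeq (k + 1) A B i : ℤ)
          = (A k : ℤ) * ((e i : ℤ) * (compoundSeq k A B i : ℤ)) := by
      intro i hi
      rw [g_succ A B (by simpa using Nat.lt_succ_iff.mp (Finset.mem_range.mp hi))]
      push_cast; ring
    rw [Finset.sum_congr rfl hsplit, ← Finset.mul_sum] at he
    set S : ℤ := ∑ i ∈ Finset.range (k + 1), (e i : ℤ) * (compoundSeq k A B i : ℤ) with hS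
    have hlast : (compoundSeq (k + 1) A B (k + 1) : ℤ) = G := by
      rw [g_last, hG]
    rw [hlast] at he
    -- he : n = A k * S + e (k+1) * G
    have heq : (A k : ℤ) * (m - S) = ((e (k + 1) : ℤ) - c) * G := by
      linear_combination he - hn
    have hdvdmul : (A k : ℤ) ∣ ((e (k + 1) : ℤ) - c) * G := ⟨m - S, heq.symm⟩
    have hic : IsCoprime (A k : ℤ) G := Nat.isCoprime_iff_coprime.mpr hcop
    have hdvd : (A k : ℤ) ∣ ((e (k + 1) : ℤ) - c) := hic.dvd_of_dvd_mul_right hdvdmul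
    obtain ⟨t, ht⟩ := hdvd
    have ha1 : (1 : ℤ) ≤ (A k : ℤ) := by exact_mod_cast hApos
    have htnn : 0 ≤ t := by
      by_contra hlt
      push_neg at hlt
      have : (e (k + 1) : ℤ) - c ≤ -(A k : ℤ) := by nlinarith
      have : (e (k + 1) : ℤ) - c > -(A k : ℤ) := by
        have : (0 : ℤ) ≤ (e (k + 1) : ℤ) := by positivity
        linarith
      linarith
    have hmval : m = S + t * G := by
      have hAne : (A k : ℤ) ≠ 0 := by positivity
      have : (A k : ℤ) * (m - S) = (A k : ℤ) * (t * G) := by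
        rw [heq, ht]; ring
      have := mul_left_cancel₀ hAne this
      linarith
    refine ⟨fun i => if i = k then e k + t.toNat * B k else e i, ?_⟩
    rw [Finset.sum_range_succ]
    simp only [if_pos rfl]
    have hrest : ∀ i ∈ Finset.range k,
        ((if i = k then e k + t.toNat * B k else e i : ℕ) : ℤ) *
          (compoundSeq k A B i : ℤ) = (e i : ℤ) * (compoundSeq k A B i : ℤ) := by
      intro i hi
      rw [if_neg (by exact Nat.ne_of_lt (Finset.mem_range.mp hi))]
    rw [Finset.sum_congr rfl hrest]
    have hSsplit : S = (∑ i ∈ Finset.range k, (e i : ℤ) * (compoundSeq k A B i : ℤ))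
        + (e k : ℤ) * (compoundSeq k A B k : ℤ) := by
      rw [hS, Finset.sum_range_succ]
    have htnat : (t.toNat : ℤ) = t := Int.toNat_of_nonneg htnn
    rw [hmval, hSsplit, hGsplit]
    push_cast [htnat]
    ring
  · rintro ⟨d, hd⟩
    refine ⟨fun i => if i = k + 1 then c.toNat else d i, ?_⟩
    rw [Finset.sum_range_succ]
    have hrest : ∀ i ∈ Finset.range (k + 1),
        ((if i = k + 1 then c.toNat else d i : ℕ) : ℤ) *
          (compoundSeq (k + 1) A B i : ℤ)
          = (A k : ℤ) * ((d i : ℤ) * (compoundSeq k A B i : ℤ)) := by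
      intro i hi
      rw [if_neg (by exact Nat.ne_of_lt (Finset.mem_range.mp hi)),
        g_succ A B (Nat.lt_succ_iff.mp (Finset.mem_range.mp hi))]
      push_cast; ring
    rw [Finset.sum_congr rfl hrest, ← Finset.mul_sum, ← hd]
    have hlast : (compoundSeq (k + 1) A B (k + 1) : ℤ) = G := by
      rw [g_last, hG]
    rw [hlast, hn]
    simp [Int.toNat_of_nonneg hc0]

lemma frob_succ (k : ℕ) :
    Frob A B (k + 1) = (A k : ℤ) * Frob A B k
      + ((A k : ℤ) - 1) * ((∏ j ∈ Finset.range (k + 1), B j : ℕ) : ℤ) := by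
  unfold Frob
  rw [Finset.sum_range_succ]
  have h1 : ∀ i ∈ Finset.range k,
      ((A i : ℤ) - 1) * (compoundSeq (k + 1) A B (i + 1) : ℤ)
        = (A k : ℤ) * (((A i : ℤ) - 1) * (compoundSeq k A B (i + 1) : ℤ)) := by
    intro i hi
    rw [g_succ A B (Finset.mem_range.mp hi)]
    push_cast; ring
  rw [Finset.sum_congr rfl h1, ← Finset.mul_sum,
    g_succ A B (Nat.zero_le k), g_last A B (k + 1)]
  push_cast
  ring

lemma frob_ge {k : ℕ} (hA : ∀ i, i < k → 0 < A i) (hB : ∀ i, i < k → 0 < B i) :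
    -1 ≤ Frob A B k := by
  induction k with
  | zero => simp [Frob, compoundSeq]
  | succ k ih =>
    have ih' := ih (fun i hi => hA i (Nat.lt_succ_of_lt hi))
      (fun i hi => hB i (Nat.lt_succ_of_lt hi))
    rw [frob_succ]
    have ha : (1 : ℤ) ≤ (A k : ℤ) := by exact_mod_cast hA k (Nat.lt_succ_self k)
    have hg : (1 : ℤ) ≤ ((∏ j ∈ Finset.range (k + 1), B j : ℕ) : ℤ) := by
      have : 0 < ∏ j ∈ Finset.range (k + 1), B j :=
        Finset.prod_pos fun j hj => hB j (Finset.mem_range.mp hj)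
      exact_mod_cast this
    nlinarith

lemma rep_symm {k : ℕ} (hA : ∀ i, i < k → 0 < A i)
    (hsuit : ∀ i j, j ≤ i → i < k → Nat.Coprime (A i) (B j)) (n : ℤ) :
    Rep A B k n ↔ ¬ Rep A B k (Frob A B k - n) := by
  induction k generalizing n with
  | zero =>
    have hg : compoundSeq 0 A B 0 = 1 := by simp [compoundSeq]
    have hrep : ∀ x : ℤ, Rep A B 0 x ↔ 0 ≤ x := by
      intro x
      constructor
      · exact rep_nonneg A B
      · intro hx
        exact ⟨fun _ => x.toNat, by simp [hg, Int.toNat_of_nonneg hx]⟩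
    have hF : Frob A B 0 = -1 := by simp [Frob, hg]
    rw [hrep, hF, hrep]
    omega
  | succ k ih =>
    have hApos : 0 < A k := hA k (Nat.lt_succ_self k)
    have hcop : Nat.Coprime (A k) (∏ j ∈ Finset.range (k + 1), B j) :=
      Nat.Coprime.prod_right fun j hj =>
        hsuit k j (Nat.lt_succ_iff.mp (Finset.mem_range.mp hj)) (Nat.lt_succ_self k)
    set a : ℤ := (A k : ℤ) with haa
    set G : ℤ := ((∏ j ∈ Finset.range (k + 1), B j : ℕ) : ℤ) with hG
    have hapos : (0 : ℤ) < a := by rw [haa]; exact_mod_cast hApos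
    have hic : IsCoprime a G := Nat.isCoprime_iff_coprime.mpr hcop
    obtain ⟨u, v, huv⟩ := hic
    set c : ℤ := (n * v) % a with hc
    have hc0 : 0 ≤ c := Int.emod_nonneg _ (by positivity)
    have hca : c < a := Int.emod_lt_of_pos _ hapos
    have hdvd : a ∣ n - c * G := by
      have h1 : c ≡ n * v [ZMOD a] := Int.emod_emod_of_dvd _ dvd_rfl
      have h2 : n - c * G ≡ n - n * v * G [ZMOD a] :=
        (Int.ModEq.refl n).sub (h1.mul_right G)
      have h3 : n - n * v * G = n * u * a := by linear_combination (-n) * huv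
      have h4 : n - n * v * G ≡ 0 [ZMOD a] := by
        rw [h3]
        exact (Int.modEq_zero_iff_dvd).mpr ⟨n * u, by ring⟩
      exact (Int.modEq_zero_iff_dvd).mp (h2.trans h4)
    set m : ℤ := (n - c * G) / a with hm
    have hn : n = a * m + c * G := by
      rw [hm, Int.mul_ediv_cancel' hdvd]; ring
    have h1 : Rep A B (k + 1) n ↔ Rep A B k m := rep_rec A B hApos hcop hc0 hca hn
    have hn' : Frob A B (k + 1) - n = a * (Frob A B k - m) + (a - 1 - c) * G := by
      rw [frob_succ]
      linear_combination -hn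
    have h2 : Rep A B (k + 1) (Frob A B (k + 1) - n) ↔ Rep A B k (Frob A B k - m) :=
      rep_rec A B hApos hcop (by linarith) (by linarith) hn'
    rw [h1, h2]
    exact ih (fun i hi => hA i (Nat.lt_succ_of_lt hi))
      (fun i j hj hi => hsuit i j hj (Nat.lt_succ_of_lt hi)) m

lemma rhs_eq (K : ℕ) (hA : ∀ i, i < K + 1 → 0 < A i) :
    (A K : ℤ) * (B 0 : ℤ) *
        (∑ i ∈ Finset.range (K + 1), (compoundSeq K A (fun l => B (l + 1)) i : ℤ)) -
      (∑ i ∈ Finset.range (K + 2), (compoundSeq (K + 1) A B i : ℤ)) + 1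
    = Frob A B (K + 1) + 1 := by
  have key : ∀ i ∈ Finset.range (K + 1),
      (A K : ℤ) * (B 0 : ℤ) * (compoundSeq K A (fun l => B (l + 1)) i : ℤ)
        = (A i : ℤ) * (compoundSeq (K + 1) A B (i + 1) : ℤ) := by
    intro i hi
    have hiK : i ≤ K := Nat.lt_succ_iff.mp (Finset.mem_range.mp hi)
    have hnat : A K * B 0 * compoundSeq K A (fun l => B (l + 1)) i
        = A i * compoundSeq (K + 1) A B (i + 1) := by
      unfold compoundSeq
      rw [Finset.prod_range_succ' B i]
      have e1 := Finset.prod_eq_prod_Ico_succ_bot (Nat.lt_succ_of_le hiK) A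
      have e2 := Finset.prod_Ico_succ_top hiK A
      calc A K * B 0 * ((∏ j ∈ Finset.range i, (fun l => B (l + 1)) j) *
              ∏ j ∈ Finset.Ico i K, A j)
          = B 0 * (∏ j ∈ Finset.range i, B (j + 1)) *
              ((∏ j ∈ Finset.Ico i K, A j) * A K) := by ring
        _ = B 0 * (∏ j ∈ Finset.range i, B (j + 1)) *
              (∏ j ∈ Finset.Ico i (K + 1), A j) := by rw [e2]
        _ = B 0 * (∏ j ∈ Finset.range i, B (j + 1)) *
              (A i * ∏ j ∈ Finset.Ico (i + 1) (K + 1), A j) := by rw [e1]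
        _ = A i * ((∏ j ∈ Finset.range i, B (j + 1)) * B 0 *
              ∏ j ∈ Finset.Ico (i + 1) (K + 1), A j) := by ring
    exact_mod_cast congrArg (fun x : ℕ => (x : ℤ)) hnat
  rw [Finset.mul_sum, Finset.sum_congr rfl key]
  have hsplit : (∑ i ∈ Finset.range (K + 2), (compoundSeq (K + 1) A B i : ℤ))
      = (∑ i ∈ Finset.range (K + 1), (compoundSeq (K + 1) A B (i + 1) : ℤ))
        + (compoundSeq (K + 1) A B 0 : ℤ) := by
    rw [Finset.sum_range_succ' (fun i => (compoundSeq (K + 1) A B i : ℤ)) (K + 1)]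
  rw [hsplit]
  unfold Frob
  have hsub : ∑ i ∈ Finset.range (K + 1),
      ((A i : ℤ) - 1) * (compoundSeq (K + 1) A B (i + 1) : ℤ)
      = (∑ i ∈ Finset.range (K + 1), (A i : ℤ) * (compoundSeq (K + 1) A B (i + 1) : ℤ))
        - ∑ i ∈ Finset.range (K + 1), (compoundSeq (K + 1) A B (i + 1) : ℤ) := by
    rw [← Finset.sum_sub_distrib]
    exact Finset.sum_congr rfl fun i _ => by ring
  rw [hsub]
  ring

end CompoundAux

/-- For a suitable pair `(A,B)`, the number of nonrepresentable nonnegative integers is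
`S₀(A,B) = (a_k·b₁·σ(π_k(A),π_1(B)) − σ(A,B) + 1)/2`; i.e. the genus equals `(F+1)/2` where
`F` is the Frobenius number, so the semigroup is symmetric. -/
theorem genus_compound (k : ℕ) (hk : 1 ≤ k) (A B : ℕ → ℕ)
    (hA : ∀ i, i < k → 0 < A i) (hB : ∀ i, i < k → 0 < B i)
    (hsuit : ∀ i j, j ≤ i → i < k → Nat.Coprime (A i) (B j))
    (NR : Finset ℕ)
    (hNR : ∀ n : ℕ, n ∈ NR ↔
      ¬ ∃ c : Fin (k + 1) → ℕ, n = ∑ i : Fin (k + 1), c i * compoundSeq k A B (i : ℕ)) :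
    (2 * NR.card : ℤ) =
      (A (k - 1) : ℤ) * (B 0 : ℤ) *
          (∑ i ∈ Finset.range k, (compoundSeq (k - 1) A (fun l => B (l + 1)) i : ℤ)) -
        (∑ i ∈ Finset.range (k + 1), (compoundSeq k A B i : ℤ)) + 1 := by
  classical
  open CompoundAux in
  -- bridge hNR to Rep
  have hbridge : ∀ n : ℕ, n ∈ NR ↔ ¬ CompoundAux.Rep A B k (n : ℤ) := by
    intro n
    rw [hNR n]
    constructor
    · intro h hrep
      obtain ⟨c, hc⟩ := hrep
      apply h
      refine ⟨fun i => c i.val, ?_⟩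
      have : ((n : ℤ)) = ∑ i ∈ Finset.range (k + 1),
          ((c i : ℕ) : ℤ) * (compoundSeq k A B i : ℤ) := hc
      have h2 : (n : ℤ) = ((∑ i ∈ Finset.range (k + 1), c i * compoundSeq k A B i : ℕ) : ℤ) := by
        push_cast
        exact this
      have h3 : n = ∑ i ∈ Finset.range (k + 1), c i * compoundSeq k A B i :=
        Nat.cast_injective h2
      rw [h3, ← Fin.sum_univ_eq_sum_range (fun i => c i * compoundSeq k A B i) (k + 1)]
    · intro h hrep
      obtain ⟨c, hc⟩ := hrep
      apply h
      refine ⟨fun i => if h : i < k + 1 then c ⟨i, h⟩ else 0, ?_⟩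
      have hsum : ∑ i ∈ Finset.range (k + 1),
          (((if h : i < k + 1 then c ⟨i, h⟩ else 0 : ℕ)) : ℤ) * (compoundSeq k A B i : ℤ)
          = ∑ i : Fin (k + 1), ((c i : ℕ) : ℤ) * (compoundSeq k A B (i : ℕ) : ℤ) := by
        rw [← Fin.sum_univ_eq_sum_range
          (fun i => (((if h : i < k + 1 then c ⟨i, h⟩ else 0 : ℕ)) : ℤ) *
            (compoundSeq k A B i : ℤ)) (k + 1)]
        apply Finset.sum_congr rfl
        intro i _
        simp [i.isLt]
      rw [hsum]
      push_cast [hc]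
      rfl
  set F : ℤ := CompoundAux.Frob A B k with hF
  have hsymm : ∀ n : ℤ, CompoundAux.Rep A B k n ↔ ¬ CompoundAux.Rep A B k (F - n) :=
    fun n => CompoundAux.rep_symm A B hA hsuit n
  have hFge : -1 ≤ F := CompoundAux.frob_ge A B hA hB
  set T : Finset ℤ := Finset.Icc (0 : ℤ) F with hT
  set Nfilt : Finset ℤ := T.filter (fun n => ¬ CompoundAux.Rep A B k n) with hNf
  set Sfilt : Finset ℤ := T.filter (fun n => CompoundAux.Rep A B k n) with hSf
  -- NR.card = Nfilt.card
  have hcard1 : NR.card = Nfilt.card := by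
    refine Finset.card_bij (fun (n : ℕ) (_ : n ∈ NR) => (n : ℤ)) ?_ ?_ ?_
    · intro n hn
      have hnrep : ¬ CompoundAux.Rep A B k (n : ℤ) := (hbridge n).mp hn
      have hle : (n : ℤ) ≤ F := by
        by_contra hgt
        push_neg at hgt
        have : ¬ CompoundAux.Rep A B k (F - n) := by
          intro hrep
          have := CompoundAux.rep_nonneg A B hrep
          linarith
        exact hnrep ((hsymm n).mpr this)
      simp only [hNf, Finset.mem_filter, hT, Finset.mem_Icc]
      exact ⟨⟨by positivity, hle⟩, hnrep⟩
    · intro n₁ _ n₂ _ h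
      have h' : (n₁ : ℤ) = (n₂ : ℤ) := h
      exact_mod_cast h'
    · intro b hb
      simp only [hNf, Finset.mem_filter, hT, Finset.mem_Icc] at hb
      obtain ⟨⟨hb0, _⟩, hbrep⟩ := hb
      refine ⟨b.toNat, ?_, ?_⟩
      · rw [hbridge, Int.toNat_of_nonneg hb0]
        exact hbrep
      · exact Int.toNat_of_nonneg hb0
  -- Sfilt.card = Nfilt.card
  have hcard2 : Sfilt.card = Nfilt.card := by
    refine Finset.card_bij (fun (n : ℤ) (_ : n ∈ Sfilt) => F - n) ?_ ?_ ?_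
    · intro n hn
      simp only [hSf, hNf, Finset.mem_filter, hT, Finset.mem_Icc] at hn ⊢
      obtain ⟨⟨h0, hle⟩, hrep⟩ := hn
      exact ⟨⟨by linarith, by linarith⟩, (hsymm n).mp hrep⟩
    · intro n₁ _ n₂ _ h
      have h' : F - n₁ = F - n₂ := h
      linarith
    · intro b hb
      simp only [hNf, Finset.mem_filter, hT, Finset.mem_Icc] at hb
      obtain ⟨⟨hb0, hble⟩, hbrep⟩ := hb
      refine ⟨F - b, ?_, by ring⟩
      simp only [hSf, Finset.mem_filter, hT, Finset.mem_Icc]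
      refine ⟨⟨by linarith, by linarith⟩, ?_⟩
      rw [hsymm]
      simpa using hbrep
  have hcard3 : Sfilt.card + Nfilt.card = T.card :=
    Finset.card_filter_add_card_filter_not _
  have hcard4 : (T.card : ℤ) = F + 1 := by
    rw [hT, Int.card_Icc]
    rw [Int.toNat_of_nonneg (by linarith)]
    ring
  have hmain : (2 * NR.card : ℤ) = F + 1 := by
    rw [← hcard4, ← hcard3]
    push_cast [hcard1, hcard2]
    ring
  rw [hmain]
  -- RHS algebra
  obtain ⟨K, rfl⟩ : ∃ K, k = K + 1 := ⟨k - 1, (Nat.succ_pred_eq_of_pos hk).symm⟩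
  simp only [Nat.add_sub_cancel]
  exact (CompoundAux.rhs_eq A B K hA).symm
end

section
/- For a suitable pair (A,B), the third Sylvester sum satisfies S_3(A,B) = (S_0^2 − S_0)^2/4 + (S_0(A^2,B^2)/4)·S_0·(S_0−1) + (S_0(A^2,B^2)/48)·(S_0(A^2,B^2)+2) − S_0(A^4,B^4)/240, with S_0 = S_0(A,B). -/
/-!
The numbers `w_c = ∑ᵢ cᵢ gᵢ` with digits `0 ≤ cᵢ < aᵢ` form the Apéry set of the semigroup
`⟨g₀, …, g_k⟩` with respect to `g₀ = a₁⋯a_k`: since `gcd(aᵢ, bⱼ) = 1` they meet every residue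
class mod `g₀` exactly once, and `n` is representable iff `n ≥ w_c` for the `w_c ≡ n`. So the gaps
are the `w_c - z g₀` with `1 ≤ z ≤ w_c / g₀`, and whenever `φ(u) = h(u + g₀) - h(u)`,
`∑_{gaps} φ = ∑_c h(w_c) - ∑_{r < g₀} h(r)`. For `φ = 1` and `φ = u³` this `h` is a polynomial,
and the power sums `∑_c w_c^p` over the digit box are moments of a sum of independent uniform
variables, hence polynomials in `g₀` and `Eₑ = ∑ᵢ (aᵢᵉ - 1) gᵢᵉ` (the `e`-th cumulant of `cᵢ gᵢ` is
`Bₑ (aᵢᵉ - 1) gᵢᵉ / e`, with `B₁ = 1/2`). This gives `S₀(Aᵉ, Bᵉ) = (Eₑ - g₀ᵉ + 1) / 2` and `S₃` as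
a polynomial in `g₀, E₁, E₂, E₄`; eliminating `E₁, E₂, E₄` yields the formula.
-/

open Finset

lemma sum_range_natCast (n : ℕ) : ∑ i ∈ range n, (i : ℚ) = n * (n - 1) / 2 := by
  induction n with
  | zero => simp
  | succ n ih => rw [sum_range_succ, ih]; push_cast; ring

lemma sum_range_natCast_sq (n : ℕ) :
    ∑ i ∈ range n, (i : ℚ) ^ 2 = n * (n - 1) * (2 * n - 1) / 6 := by
  induction n with
  | zero => simp
  | succ n ih => rw [sum_range_succ, ih]; push_cast; ring

lemma sum_range_natCast_pow_three (n : ℕ) :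
    ∑ i ∈ range n, (i : ℚ) ^ 3 = n ^ 2 * (n - 1) ^ 2 / 4 := by
  induction n with
  | zero => simp
  | succ n ih => rw [sum_range_succ, ih]; push_cast; ring

lemma sum_range_natCast_pow_four (n : ℕ) :
    ∑ i ∈ range n, (i : ℚ) ^ 4 = n * (n - 1) * (2 * n - 1) * (3 * n ^ 2 - 3 * n - 1) / 30 := by
  induction n with
  | zero => simp
  | succ n ih => rw [sum_range_succ, ih]; push_cast; ring

namespace CompoundSeq

variable {k : ℕ} {A B : ℕ → ℕ}

def Representable (k : ℕ) (A B : ℕ → ℕ) (n : ℕ) : Prop :=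
  ∃ c : Fin (k + 1) → ℕ, n = ∑ i : Fin (k + 1), c i * compoundSeq k A B (i : ℕ)

def digitBox (k : ℕ) (A : ℕ → ℕ) : Finset (Fin k → ℕ) :=
  Fintype.piFinset fun j => range (A j)

def digitWeight {R : Type*} [Semiring R] (G : ℕ → R) (c : Fin k → ℕ) : R :=
  ∑ j, c j * G j

def apery (k : ℕ) (A B : ℕ → ℕ) (c : Fin k → ℕ) : ℕ :=
  digitWeight (fun j => compoundSeq k A B (j + 1)) c

lemma compoundSeq_zero (k : ℕ) (A B : ℕ → ℕ) : compoundSeq k A B 0 = ∏ j ∈ range k, A j := by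
  rw [compoundSeq, range_zero, prod_empty, one_mul, range_eq_Ico]

lemma compoundSeq_succ_succ (i : ℕ) :
    compoundSeq (k + 1) A B (i + 1) =
      B 0 * compoundSeq k (fun t => A (t + 1)) (fun t => B (t + 1)) i := by
  unfold compoundSeq
  rw [prod_range_succ' B, prod_Ico_eq_prod_range, prod_Ico_eq_prod_range, Nat.add_sub_add_right]
  simp only [add_right_comm i 1]
  ring

lemma compoundSeq_pow (e i : ℕ) :
    compoundSeq k (fun t => A t ^ e) (fun t => B t ^ e) i = compoundSeq k A B i ^ e := by
  simp [compoundSeq, mul_pow, prod_pow]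

lemma mem_digitBox {c : Fin k → ℕ} : c ∈ digitBox k A ↔ ∀ j, c j < A j := by
  simp [digitBox]

lemma cons_mem_digitBox {x : ℕ} {c : Fin k → ℕ} :
    (Fin.cons x c : Fin (k + 1) → ℕ) ∈ digitBox (k + 1) A ↔
      x < A 0 ∧ c ∈ digitBox k (fun t => A (t + 1)) := by
  simp [digitBox, Fin.forall_fin_succ]

lemma card_digitBox : #(digitBox k A) = ∏ j ∈ range k, A j := by
  simp [digitBox, Fin.prod_univ_eq_prod_range]

lemma sum_digitBox_succ {M : Type*} [AddCommMonoid M] (F : (Fin (k + 1) → ℕ) → M) :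
    ∑ c ∈ digitBox (k + 1) A, F c =
      ∑ x ∈ range (A 0), ∑ c ∈ digitBox k (fun t => A (t + 1)), F (Fin.cons x c) := by
  rw [← sum_product']
  refine sum_nbij' (fun c => (c 0, Fin.tail c)) (fun p => Fin.cons p.1 p.2) ?_ ?_ ?_ ?_ ?_
  · intro c hc
    rw [← Fin.cons_self_tail c, cons_mem_digitBox] at hc
    simpa using hc
  · rintro ⟨x, c⟩ h
    simpa [cons_mem_digitBox] using h
  · intro c _
    exact Fin.cons_self_tail c
  · intro p _
    simp
  · intro c _
    rw [Fin.cons_self_tail]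

lemma digitWeight_cons {R : Type*} [Semiring R] (G : ℕ → R) (x : ℕ) (c : Fin k → ℕ) :
    digitWeight G (Fin.cons x c : Fin (k + 1) → ℕ) =
      x * G 0 + digitWeight (fun t => G (t + 1)) c := by
  simp [digitWeight, Fin.sum_univ_succ]

lemma apery_cons (x : ℕ) (c : Fin k → ℕ) :
    apery (k + 1) A B (Fin.cons x c) =
      B 0 * (x * ∏ j ∈ range k, A (j + 1) +
        apery k (fun t => A (t + 1)) (fun t => B (t + 1)) c) := by
  rw [apery, apery, digitWeight_cons]
  simp only [compoundSeq_succ_succ, compoundSeq_zero, digitWeight, Nat.cast_id]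
  rw [mul_add, mul_sum]
  congr 1
  · ring
  · exact sum_congr rfl fun j _ => by ring

lemma representable_apery_add (c : Fin k → ℕ) (z : ℕ) :
    Representable k A B (apery k A B c + z * ∏ j ∈ range k, A j) := by
  refine ⟨Fin.cons z c, ?_⟩
  simp [Fin.sum_univ_succ, compoundSeq_zero, apery, digitWeight, add_comm]

lemma Representable.exists_apery_add (hA : ∀ i, i < k → 0 < A i) {n : ℕ}
    (hn : Representable k A B n) :
    ∃ c ∈ digitBox k A, ∃ z, n = apery k A B c + z * ∏ j ∈ range k, A j := by
  induction k generalizing A B n with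
  | zero =>
    obtain ⟨co, rfl⟩ := hn
    exact ⟨Fin.elim0, by simp [mem_digitBox], co 0, by simp [apery, digitWeight, compoundSeq]⟩
  | succ k ih =>
    obtain ⟨co, rfl⟩ := hn
    obtain ⟨c, hc, z, hz⟩ := ih (B := fun t => B (t + 1)) (fun i hi => hA (i + 1) (by omega))
      ⟨fun i => co i.succ, rfl⟩
    have hA0 : 0 < A 0 := hA 0 (by omega)
    refine ⟨Fin.cons (z % A 0) c, cons_mem_digitBox.2 ⟨Nat.mod_lt z hA0, hc⟩,
      co 0 + B 0 * (z / A 0), ?_⟩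
    have htail : ∑ i : Fin (k + 1), co i.succ * compoundSeq (k + 1) A B (i + 1) =
        B 0 * (apery k (fun t => A (t + 1)) (fun t => B (t + 1)) c +
          (z % A 0 + A 0 * (z / A 0)) * ∏ j ∈ range k, A (j + 1)) := by
      simp only [compoundSeq_succ_succ, Nat.mod_add_div, ← hz, mul_sum]
      exact sum_congr rfl fun i _ => by ring
    rw [Fin.sum_univ_succ, apery_cons, prod_range_succ' A]
    simp only [Fin.val_zero, Fin.val_succ, compoundSeq_zero, htail, prod_range_succ' A]
    ring

lemma apery_modEq_injOn (hA : ∀ i, i < k → 0 < A i)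
    (hsuit : ∀ i j, j ≤ i → i < k → Nat.Coprime (A i) (B j)) :
    ∀ c ∈ digitBox k A, ∀ d ∈ digitBox k A,
      apery k A B c ≡ apery k A B d [MOD ∏ j ∈ range k, A j] → c = d := by
  induction k generalizing A B with
  | zero => exact fun c _ d _ _ => funext fun j => j.elim0
  | succ k ih =>
    intro c hc d hd h
    cases c using Fin.consCases with | cons x c => ?_
    cases d using Fin.consCases with | cons y d => ?_
    rw [cons_mem_digitBox] at hc hd
    set Q' := ∏ j ∈ range k, A (j + 1)
    have hQ' : 0 < Q' := prod_pos fun j hj => hA (j + 1) (by simp at hj; omega)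
    have hcop : Nat.Coprime (Q' * A 0) (B 0) :=
      Nat.Coprime.mul_left (Nat.Coprime.prod_left fun j hj => hsuit (j + 1) 0 (by omega)
        (by simp at hj; omega)) (hsuit 0 0 le_rfl (by omega))
    rw [apery_cons, apery_cons, prod_range_succ'] at h
    have h1 := Nat.ModEq.cancel_left_of_coprime hcop h
    have hQ'dvd : x * Q' ≡ y * Q' [MOD Q'] :=
      (Nat.modEq_zero_iff_dvd.2 (dvd_mul_left _ _)).trans
        (Nat.modEq_zero_iff_dvd.2 (dvd_mul_left _ _)).symm
    obtain rfl : c = d := ih (fun i hi => hA (i + 1) (by omega))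
      (fun i j hij hi => hsuit (i + 1) (j + 1) (by omega) (by omega)) c hc.2 d hd.2
      (Nat.ModEq.add_left_cancel hQ'dvd (h1.of_mul_right _))
    have hxy : x ≡ y [MOD A 0] :=
      Nat.ModEq.mul_right_cancel' hQ'.ne' (by rw [mul_comm (A 0)]; exact h1.add_right_cancel' _)
    rw [hxy.eq_of_lt_of_lt hc.1 hd.1]

lemma apery_mod_bijOn (hA : ∀ i, i < k → 0 < A i)
    (hsuit : ∀ i j, j ≤ i → i < k → Nat.Coprime (A i) (B j)) :
    Set.BijOn (fun c => apery k A B c % ∏ j ∈ range k, A j) (digitBox k A)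
      (range (∏ j ∈ range k, A j)) := by
  have hQ : 0 < ∏ j ∈ range k, A j := prod_pos fun j hj => hA j (mem_range.1 hj)
  have hmaps : Set.MapsTo (fun c => apery k A B c % ∏ j ∈ range k, A j) (digitBox k A)
      (range (∏ j ∈ range k, A j)) := fun c _ => mem_range.2 (Nat.mod_lt _ hQ)
  have hinj := apery_modEq_injOn (B := B) hA hsuit
  exact ⟨hmaps, hinj, surjOn_of_injOn_of_card_le _ hmaps hinj (by simp [card_digitBox])⟩

lemma representable_iff_apery_le (hA : ∀ i, i < k → 0 < A i)
    (hsuit : ∀ i j, j ≤ i → i < k → Nat.Coprime (A i) (B j))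
    {c : Fin k → ℕ} (hc : c ∈ digitBox k A) {n : ℕ}
    (hcn : apery k A B c ≡ n [MOD ∏ j ∈ range k, A j]) :
    Representable k A B n ↔ apery k A B c ≤ n := by
  constructor
  · intro hn
    obtain ⟨d, hd, z, rfl⟩ := hn.exists_apery_add hA
    have hdc : apery k A B d ≡ apery k A B c [MOD ∏ j ∈ range k, A j] :=
      Nat.ModEq.trans (Nat.add_mul_mod_self_right _ _ _).symm hcn.symm
    rw [apery_modEq_injOn hA hsuit d hd c hc hdc]
    exact Nat.le_add_right _ _
  · intro hle
    obtain ⟨z, hz⟩ := (Nat.modEq_iff_dvd' hle).1 hcn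
    rw [← Nat.add_sub_cancel' hle, hz, mul_comm]
    exact representable_apery_add c z

lemma sum_not_representable {M : Type*} [AddCommMonoid M] (hA : ∀ i, i < k → 0 < A i)
    (hsuit : ∀ i j, j ≤ i → i < k → Nat.Coprime (A i) (B j)) {NR : Finset ℕ}
    (hNR : ∀ n, n ∈ NR ↔ ¬ Representable k A B n) (φ : ℕ → M) :
    ∑ n ∈ NR, φ n = ∑ c ∈ digitBox k A, ∑ z ∈ range (apery k A B c / ∏ j ∈ range k, A j),
      φ (apery k A B c % (∏ j ∈ range k, A j) + z * ∏ j ∈ range k, A j) := by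
  have hbij := apery_mod_bijOn (B := B) hA hsuit
  set Q := ∏ j ∈ range k, A j with hQdef
  have hQ : 0 < Q := prod_pos fun j hj => hA j (mem_range.1 hj)
  rw [sum_sigma']
  refine (sum_bij (fun x _ => apery k A B x.1 % Q + x.2 * Q) ?_ ?_ ?_ fun _ _ => rfl).symm
  · rintro ⟨c, z⟩ hcz
    simp only [mem_sigma, mem_range] at hcz ⊢
    rw [hNR, representable_iff_apery_le hA hsuit hcz.1
      ((Nat.add_mul_mod_self_right _ _ _).trans (Nat.mod_mod _ _)).symm, not_le, ← hQdef]
    have hzQ := Nat.mul_lt_mul_of_pos_right hcz.2 hQ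
    have := Nat.mod_add_div (apery k A B c) Q
    rw [mul_comm] at this
    omega
  · rintro ⟨c, z⟩ hcz ⟨d, y⟩ hdy h
    simp only [mem_sigma] at hcz hdy h
    have hres : apery k A B c % Q = apery k A B d % Q := by
      simpa [Nat.add_mul_mod_self_right, Nat.mod_mod] using congrArg (· % Q) h
    obtain rfl := hbij.injOn hcz.1 hdy.1 hres
    simp only [add_right_inj, mul_left_inj' hQ.ne'] at h
    rw [h]
  · intro n hn
    obtain ⟨c, hc, hcn : apery k A B c % Q = n % Q⟩ := hbij.surjOn (mem_range.2 (Nat.mod_lt n hQ))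
    have hlt : n < apery k A B c := by
      rwa [hNR, representable_iff_apery_le hA hsuit hc hcn, not_le] at hn
    refine ⟨⟨c, n / Q⟩, mem_sigma.2 ⟨hc, mem_range.2 ?_⟩, ?_⟩
    · show n / Q < apery k A B c / Q
      by_contra! hge
      have := Nat.mul_le_mul_left Q hge
      have := Nat.mod_add_div n Q
      have := Nat.mod_add_div (apery k A B c) Q
      omega
    · simp only
      rw [hcn, Nat.mod_add_div']

lemma sum_not_representable_eq_sub {M : Type*} [AddCommGroup M] (hA : ∀ i, i < k → 0 < A i)
    (hsuit : ∀ i j, j ≤ i → i < k → Nat.Coprime (A i) (B j)) {NR : Finset ℕ}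
    (hNR : ∀ n, n ∈ NR ↔ ¬ Representable k A B n) (φ h : ℕ → M)
    (hφ : ∀ u, φ u = h (u + ∏ j ∈ range k, A j) - h u) :
    ∑ n ∈ NR, φ n =
      ∑ c ∈ digitBox k A, h (apery k A B c) - ∑ r ∈ range (∏ j ∈ range k, A j), h r := by
  have hbij := apery_mod_bijOn (B := B) hA hsuit
  rw [sum_not_representable hA hsuit hNR, ← sum_nbij _ hbij.mapsTo hbij.injOn hbij.surjOn
    fun _ _ => rfl, ← sum_sub_distrib]
  refine sum_congr rfl fun c _ => ?_
  set Q := ∏ j ∈ range k, A j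
  have htel : ∀ z, φ (apery k A B c % Q + z * Q) =
      h (apery k A B c % Q + (z + 1) * Q) - h (apery k A B c % Q + z * Q) := fun z => by
    rw [hφ, add_one_mul, add_assoc]
  rw [sum_congr rfl fun z _ => htel z, sum_range_sub (fun z => h (apery k A B c % Q + z * Q)),
    Nat.mod_add_div', zero_mul, add_zero]

def weightPowerSum (k : ℕ) (a : ℕ → ℕ) (G : ℕ → ℚ) (e : ℕ) : ℚ :=
  ∑ j ∈ range k, ((a j : ℚ) ^ e - 1) * G j ^ e

lemma weightPowerSum_succ (a : ℕ → ℕ) (G : ℕ → ℚ) (e : ℕ) :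
    weightPowerSum (k + 1) a G e =
      ((a 0 : ℚ) ^ e - 1) * G 0 ^ e +
        weightPowerSum k (fun t => a (t + 1)) (fun t => G (t + 1)) e := by
  rw [weightPowerSum, sum_range_succ', add_comm]
  rfl

lemma sum_digitBox_succ_digitWeight_pow (a : ℕ → ℕ) (G : ℕ → ℚ) (p : ℕ) :
    ∑ c ∈ digitBox (k + 1) a, digitWeight G c ^ p =
      ∑ i ∈ range (p + 1), (p.choose i : ℚ) * G 0 ^ i * (∑ x ∈ range (a 0), (x : ℚ) ^ i) *
        ∑ c ∈ digitBox k (fun t => a (t + 1)), digitWeight (fun t => G (t + 1)) c ^ (p - i) := by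
  simp only [sum_digitBox_succ, digitWeight_cons, add_pow, mul_sum, sum_mul]
  rw [sum_comm]
  conv_lhs => enter [2, c]; rw [sum_comm]
  rw [sum_comm]
  exact sum_congr rfl fun i _ => sum_congr rfl fun c _ => sum_congr rfl fun x _ => by ring

lemma sum_digitWeight (a : ℕ → ℕ) (G : ℕ → ℚ) :
    ∑ c ∈ digitBox k a, digitWeight G c =
      (∏ j ∈ range k, (a j : ℚ)) * weightPowerSum k a G 1 / 2 := by
  induction k generalizing a G with
  | zero => simp [digitBox, digitWeight, weightPowerSum]
  | succ k ih =>
    have := sum_digitBox_succ_digitWeight_pow (k := k) a G 1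
    norm_num [sum_range_succ, ih, card_digitBox, Nat.cast_prod, sum_range_natCast] at this
    rw [this, weightPowerSum_succ, prod_range_succ']
    ring

lemma sum_digitWeight_sq (a : ℕ → ℕ) (G : ℕ → ℚ) :
    ∑ c ∈ digitBox k a, digitWeight G c ^ 2 = (∏ j ∈ range k, (a j : ℚ)) *
      (weightPowerSum k a G 2 / 12 + weightPowerSum k a G 1 ^ 2 / 4) := by
  induction k generalizing a G with
  | zero => simp [digitBox, digitWeight, weightPowerSum]
  | succ k ih =>
    have := sum_digitBox_succ_digitWeight_pow (k := k) a G 2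
    norm_num [sum_range_succ, Nat.choose, ih, sum_digitWeight, card_digitBox, Nat.cast_prod,
      sum_range_natCast, sum_range_natCast_sq] at this
    rw [this, weightPowerSum_succ, weightPowerSum_succ, prod_range_succ']
    ring

lemma sum_digitWeight_pow_three (a : ℕ → ℕ) (G : ℕ → ℚ) :
    ∑ c ∈ digitBox k a, digitWeight G c ^ 3 = (∏ j ∈ range k, (a j : ℚ)) *
      (weightPowerSum k a G 1 * weightPowerSum k a G 2 / 8 + weightPowerSum k a G 1 ^ 3 / 8) := by
  induction k generalizing a G with
  | zero => simp [digitBox, digitWeight, weightPowerSum]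
  | succ k ih =>
    have := sum_digitBox_succ_digitWeight_pow (k := k) a G 3
    norm_num [sum_range_succ, Nat.choose, ih, sum_digitWeight, sum_digitWeight_sq,
      card_digitBox, Nat.cast_prod, sum_range_natCast, sum_range_natCast_sq,
      sum_range_natCast_pow_three] at this
    rw [this, weightPowerSum_succ, weightPowerSum_succ, prod_range_succ']
    ring

lemma sum_digitWeight_pow_four (a : ℕ → ℕ) (G : ℕ → ℚ) :
    ∑ c ∈ digitBox k a, digitWeight G c ^ 4 = (∏ j ∈ range k, (a j : ℚ)) *
      (-weightPowerSum k a G 4 / 120 + weightPowerSum k a G 2 ^ 2 / 48 +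
        weightPowerSum k a G 1 ^ 2 * weightPowerSum k a G 2 / 8 +
        weightPowerSum k a G 1 ^ 4 / 16) := by
  induction k generalizing a G with
  | zero => simp [digitBox, digitWeight, weightPowerSum]
  | succ k ih =>
    have := sum_digitBox_succ_digitWeight_pow (k := k) a G 4
    norm_num [sum_range_succ, Nat.choose, ih, sum_digitWeight, sum_digitWeight_sq,
      sum_digitWeight_pow_three, card_digitBox, Nat.cast_prod, sum_range_natCast,
      sum_range_natCast_sq, sum_range_natCast_pow_three, sum_range_natCast_pow_four] at this
    rw [this, weightPowerSum_succ, weightPowerSum_succ, weightPowerSum_succ, prod_range_succ']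
    ring

lemma cast_apery (c : Fin k → ℕ) :
    (apery k A B c : ℚ) = digitWeight (fun j => (compoundSeq k A B (j + 1) : ℚ)) c := by
  simp [apery, digitWeight]

theorem card_not_representable (hA : ∀ i, i < k → 0 < A i)
    (hsuit : ∀ i j, j ≤ i → i < k → Nat.Coprime (A i) (B j)) {NR : Finset ℕ}
    (hNR : ∀ n, n ∈ NR ↔ ¬ Representable k A B n) :
    (#NR : ℚ) = (weightPowerSum k A (fun j => (compoundSeq k A B (j + 1) : ℚ)) 1 -
      ∏ j ∈ range k, (A j : ℚ) + 1) / 2 := by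
  have hQ : (∏ j ∈ range k, (A j : ℚ)) ≠ 0 :=
    prod_ne_zero_iff.2 fun j hj => by exact_mod_cast (hA j (mem_range.1 hj)).ne'
  have h := sum_not_representable_eq_sub hA hsuit hNR (fun _ => (1 : ℚ))
    (fun u => (u : ℚ) / ∏ j ∈ range k, (A j : ℚ)) fun u => by push_cast; field_simp; ring
  rw [← sum_div, ← sum_div] at h
  simp only [cast_apery, sum_digitWeight, sum_range_natCast, sum_const, nsmul_eq_mul, mul_one] at h
  rw [h]
  push_cast
  field_simp
  ring

theorem sum_not_representable_pow_three (hA : ∀ i, i < k → 0 < A i)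
    (hsuit : ∀ i j, j ≤ i → i < k → Nat.Coprime (A i) (B j)) {NR : Finset ℕ}
    (hNR : ∀ n, n ∈ NR ↔ ¬ Representable k A B n) :
    let Q := ∏ j ∈ range k, (A j : ℚ)
    let E := weightPowerSum k A (fun j => (compoundSeq k A B (j + 1) : ℚ))
    ∑ n ∈ NR, (n : ℚ) ^ 3 = E 1 ^ 2 * (E 1 - 2 * Q) ^ 2 / 64 + E 1 * (E 1 - 2 * Q) * E 2 / 32 +
      Q ^ 2 * E 2 / 48 + E 2 ^ 2 / 192 - E 4 / 480 - (Q ^ 4 - 1) / 120 := by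
  intro Q E
  have hQ : ∏ j ∈ range k, (A j : ℚ) ≠ 0 :=
    prod_ne_zero_iff.2 fun j hj => by exact_mod_cast (hA j (mem_range.1 hj)).ne'
  have h := sum_not_representable_eq_sub hA hsuit hNR (fun n => (n : ℚ) ^ 3)
    (fun u => (u : ℚ) ^ 4 / (4 * Q) - (u : ℚ) ^ 3 / 2 + Q * (u : ℚ) ^ 2 / 4)
    fun u => by simp only [Q]; push_cast; field_simp; ring
  simp only [sum_add_distrib, sum_sub_distrib, ← sum_div, ← mul_sum, cast_apery,
    sum_digitWeight_sq, sum_digitWeight_pow_three, sum_digitWeight_pow_four, sum_range_natCast_sq,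
    sum_range_natCast_pow_three, sum_range_natCast_pow_four] at h
  rw [h]
  simp only [Q, E]
  push_cast
  field_simp
  ring

theorem card_not_representable_pow (e : ℕ) (hA : ∀ i, i < k → 0 < A i)
    (hsuit : ∀ i j, j ≤ i → i < k → Nat.Coprime (A i) (B j)) {NR : Finset ℕ}
    (hNR : ∀ n, n ∈ NR ↔ ¬ Representable k (fun t => A t ^ e) (fun t => B t ^ e) n) :
    (#NR : ℚ) = (weightPowerSum k A (fun j => (compoundSeq k A B (j + 1) : ℚ)) e -
      (∏ j ∈ range k, (A j : ℚ)) ^ e + 1) / 2 := by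
  rw [card_not_representable (fun i hi => pow_pos (hA i hi) e)
    (fun i j hij hi => Nat.Coprime.pow e e (hsuit i j hij hi)) hNR]
  simp [weightPowerSum, compoundSeq_pow, prod_pow]

end CompoundSeq

theorem sylvester_sum_three_general (k : ℕ) (A B : ℕ → ℕ)
    (hA : ∀ i, i < k → 0 < A i)
    (hsuit : ∀ i j, j ≤ i → i < k → Nat.Coprime (A i) (B j))
    (NR NR2 NR4 : Finset ℕ)
    (hNR : ∀ n : ℕ, n ∈ NR ↔
      ¬ ∃ c : Fin (k + 1) → ℕ, n = ∑ i : Fin (k + 1), c i * compoundSeq k A B (i : ℕ))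
    (hNR2 : ∀ n : ℕ, n ∈ NR2 ↔
      ¬ ∃ c : Fin (k + 1) → ℕ,
        n = ∑ i : Fin (k + 1), c i * compoundSeq k (fun t => (A t) ^ 2) (fun t => (B t) ^ 2) (i : ℕ))
    (hNR4 : ∀ n : ℕ, n ∈ NR4 ↔
      ¬ ∃ c : Fin (k + 1) → ℕ,
        n = ∑ i : Fin (k + 1), c i * compoundSeq k (fun t => (A t) ^ 4) (fun t => (B t) ^ 4) (i : ℕ)) :
    (∑ n ∈ NR, (n : ℚ) ^ 3) =
      ((NR.card : ℚ) ^ 2 - (NR.card : ℚ)) ^ 2 / 4 +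
        (NR2.card : ℚ) / 4 * (NR.card : ℚ) * ((NR.card : ℚ) - 1) +
        (NR2.card : ℚ) / 48 * ((NR2.card : ℚ) + 2) - (NR4.card : ℚ) / 240 := by
  open CompoundSeq in
  rw [sum_not_representable_pow_three hA hsuit hNR, card_not_representable hA hsuit hNR,
    card_not_representable_pow 2 hA hsuit hNR2, card_not_representable_pow 4 hA hsuit hNR4]
  ring

/-- `S₃(A,B) = (S₀²−S₀)²/4 + (S₀(A²,B²)/4)·S₀·(S₀−1)
  + (S₀(A²,B²)/48)·(S₀(A²,B²)+2) − S₀(A⁴,B⁴)/240`. -/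
theorem sylvester_sum_three (k : ℕ) (A B : ℕ → ℕ)
    (hA : ∀ i, i < k → 0 < A i) (hB : ∀ i, i < k → 0 < B i)
    (hsuit : ∀ i j, j ≤ i → i < k → Nat.Coprime (A i) (B j))
    (NR NR2 NR4 : Finset ℕ)
    (hNR : ∀ n : ℕ, n ∈ NR ↔
      ¬ ∃ c : Fin (k + 1) → ℕ, n = ∑ i : Fin (k + 1), c i * compoundSeq k A B (i : ℕ))
    (hNR2 : ∀ n : ℕ, n ∈ NR2 ↔
      ¬ ∃ c : Fin (k + 1) → ℕ,
        n = ∑ i : Fin (k + 1), c i * compoundSeq k (fun t => (A t) ^ 2) (fun t => (B t) ^ 2) (i : ℕ))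
    (hNR4 : ∀ n : ℕ, n ∈ NR4 ↔
      ¬ ∃ c : Fin (k + 1) → ℕ,
        n = ∑ i : Fin (k + 1), c i * compoundSeq k (fun t => (A t) ^ 4) (fun t => (B t) ^ 4) (i : ℕ)) :
    (∑ n ∈ NR, (n : ℚ) ^ 3) =
      ((NR.card : ℚ) ^ 2 - (NR.card : ℚ)) ^ 2 / 4 +
        (NR2.card : ℚ) / 4 * (NR.card : ℚ) * ((NR.card : ℚ) - 1) +
        (NR2.card : ℚ) / 48 * ((NR2.card : ℚ) + 2) - (NR4.card : ℚ) / 240 :=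
  sylvester_sum_three_general k A B hA hsuit NR NR2 NR4 hNR hNR2 hNR4
end

section
/- For coprime positive integers a,b, the number of positive integers not representable as a nonnegative combination of a and b equals (a−1)(b−1)/2. -/
open Finset

private lemma rep_exists (a b : ℕ) (hb : 0 < b) (hab : Nat.Coprime a b) (n : ℤ) :
    ∃ x y : ℤ, 0 ≤ x ∧ x < b ∧ n = x * a + y * b := by
  have h : IsCoprime (a : ℤ) (b : ℤ) := Int.isCoprime_iff_gcd_eq_one.mpr hab
  obtain ⟨u, v, huv⟩ := h
  have hb' : (0 : ℤ) < b := by exact_mod_cast hb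
  refine ⟨(n * u) % b, n * v + ((n * u) / b) * a, Int.emod_nonneg _ (ne_of_gt hb'),
    Int.emod_lt_of_pos _ hb', ?_⟩
  have h1 : (n * u) % b + b * ((n * u) / b) = n * u := Int.emod_add_mul_ediv _ _
  have : n * (u * a + v * b) = n * 1 := by rw [huv]
  nlinarith [h1]

private lemma rep_iff (a b : ℕ) (ha : 0 < a) (hb : 0 < b) (hab : Nat.Coprime a b)
    (n x y : ℤ) (hx0 : 0 ≤ x) (hxb : x < b) (hn : n = x * a + y * b) :
    (∃ u v : ℕ, n = u * a + v * b) ↔ 0 ≤ y := by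
  constructor
  · rintro ⟨u, v, huv⟩
    by_contra hy
    push_neg at hy
    have ha' : (0 : ℤ) < a := by exact_mod_cast ha
    have hb' : (0 : ℤ) < b := by exact_mod_cast hb
    have hdvd : (b : ℤ) ∣ (x - (u : ℤ)) := by
      have hcop0 : IsCoprime (a : ℤ) (b : ℤ) := Int.isCoprime_iff_gcd_eq_one.mpr hab
      have : (x - (u : ℤ)) * a = b * ((v : ℤ) - y) := by linarith [hn, huv]
      exact hcop0.symm.dvd_of_dvd_mul_right ⟨(v : ℤ) - y, this⟩
    obtain ⟨k, hk⟩ := hdvd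
    -- y < 0, v ≥ 0, so (x-u)*a = (v-y)*b > 0, so x - u > 0, so k ≥ 1, x ≥ b + u ≥ b
    have hv : (0 : ℤ) ≤ v := Int.natCast_nonneg v
    have hxu : (0 : ℤ) < x - u := by nlinarith [hn, huv]
    have hk1 : 1 ≤ k := by nlinarith
    have : (b : ℤ) ≤ x := by nlinarith [Int.natCast_nonneg u]
    linarith
  · intro hy
    exact ⟨x.toNat, y.toNat, by
      rw [hn]
      push_cast [Int.toNat_of_nonneg hx0, Int.toNat_of_nonneg hy]
      ring⟩

/-- Key symmetry: `n` is representable iff `a*b - a - b - n` is not. -/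
private lemma rep_symm (a b : ℕ) (ha : 0 < a) (hb : 0 < b) (hab : Nat.Coprime a b) (n : ℤ) :
    (∃ u v : ℕ, n = u * a + v * b) ↔
      ¬ (∃ u v : ℕ, (a : ℤ) * b - a - b - n = u * a + v * b) := by
  obtain ⟨x, y, hx0, hxb, hn⟩ := rep_exists a b hb hab n
  have h1 := rep_iff a b ha hb hab n x y hx0 hxb hn
  have h2 := rep_iff a b ha hb hab ((a : ℤ) * b - a - b - n) (b - 1 - x) (-1 - y)
    (by omega) (by omega) (by rw [hn]; ring)
  rw [h1, h2]
  omega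

/-- Sylvester's theorem: for coprime positive `a, b`, the number of positive integers not
representable as `xa + yb` with `x, y` nonnegative equals `(a−1)(b−1)/2`. -/
theorem sylvester_count (a b : ℕ) (ha : 0 < a) (hb : 0 < b) (hab : Nat.Coprime a b)
    (NR : Finset ℕ)
    (hNR : ∀ n : ℕ, n ∈ NR ↔ (0 < n ∧ ¬ ∃ x y : ℕ, n = x * a + y * b)) :
    (NR.card : ℚ) = ((a : ℚ) - 1) * ((b : ℚ) - 1) / 2 := by
  classical
  set P : ℕ → Prop := fun n => ∃ x y : ℕ, n = x * a + y * b with hPdef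
  have hPZ : ∀ n : ℕ, P n ↔ ∃ u v : ℕ, (n : ℤ) = u * a + v * b := by
    intro n
    constructor
    · rintro ⟨x, y, h⟩; exact ⟨x, y, by exact_mod_cast h⟩
    · rintro ⟨x, y, h⟩; exact ⟨x, y, by exact_mod_cast h⟩
  by_cases h1 : a = 1 ∨ b = 1
  · have hall : ∀ n : ℕ, P n := by
      intro n
      rcases h1 with h | h
      · exact ⟨n, 0, by simp [h]⟩
      · exact ⟨0, n, by simp [h]⟩
    have hempty : NR = ∅ := by
      apply Finset.eq_empty_iff_forall_notMem.mpr
      intro n hn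
      exact ((hNR n).mp hn).2 (hall n)
    rcases h1 with h | h <;> simp [hempty, h]
  · push_neg at h1
    have ha2 : 2 ≤ a := by omega
    have hb2 : 2 ≤ b := by omega
    have hmn : a + b ≤ a * b := add_le_mul ha2 hb2
    set c : ℕ := a * b - a - b with hcdef
    have hc : (c : ℤ) = (a : ℤ) * b - a - b := by
      have : (a : ℤ) * b = ((a * b : ℕ) : ℤ) := by push_cast; ring
      omega
    have hP0 : P 0 := ⟨0, 0, by simp⟩
    have hbig : ∀ n : ℕ, c < n → P n := by
      intro n hn
      rw [hPZ]
      rw [rep_symm a b ha hb hab]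
      rintro ⟨u, v, h⟩
      have h0 : (0 : ℤ) ≤ (u : ℤ) * a + v * b := by positivity
      rw [← h] at h0
      have : (c : ℤ) < n := by exact_mod_cast hn
      linarith
    have keyn : ∀ n : ℕ, n ≤ c → (P n ↔ ¬ P (c - n)) := by
      intro n hn
      rw [hPZ, hPZ]
      have hcast : (a : ℤ) * b - a - b - n = ((c - n : ℕ) : ℤ) := by omega
      rw [rep_symm a b ha hb hab, hcast]
    have hNReq : NR = (Finset.range (c + 1)).filter (fun n => ¬ P n) := by
      ext n
      rw [hNR, Finset.mem_filter, Finset.mem_range]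
      constructor
      · rintro ⟨hn0, hnp⟩
        refine ⟨?_, hnp⟩
        by_contra h
        exact hnp (hbig n (by omega))
      · rintro ⟨hn1, hnp⟩
        refine ⟨?_, hnp⟩
        rcases Nat.eq_zero_or_pos n with h | h
        · exact absurd hP0 (h ▸ hnp)
        · exact h
    set T : Finset ℕ := (Finset.range (c + 1)).filter (fun n => P n) with hTdef
    have hsum : T.card + NR.card = c + 1 := by
      rw [hNReq, hTdef]
      rw [Finset.card_filter_add_card_filter_not, Finset.card_range]
    have hbij : NR.card = T.card := by
      apply Finset.card_bij (fun n _ => c - n)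
      · intro n hn
        rw [hNReq, Finset.mem_filter, Finset.mem_range] at hn
        rw [Finset.mem_filter, Finset.mem_range]
        refine ⟨by omega, ?_⟩
        have hk := keyn n (by omega)
        by_contra hq
        exact hn.2 (hk.mpr hq)
      · intro n₁ hn₁ n₂ hn₂ h
        rw [hNReq, Finset.mem_filter, Finset.mem_range] at hn₁ hn₂
        omega
      · intro m hm
        rw [Finset.mem_filter, Finset.mem_range] at hm
        refine ⟨c - m, ?_, by omega⟩
        rw [hNReq, Finset.mem_filter, Finset.mem_range]
        refine ⟨by omega, ?_⟩
        have hk := keyn (c - m) (by omega)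
        have hcm : c - (c - m) = m := by omega
        rw [hcm] at hk
        exact fun hq => (hk.mp hq) hm.2
    have h2 : 2 * NR.card = c + 1 := by omega
    have h3 : 2 * (NR.card : ℤ) = (a : ℤ) * b - a - b + 1 := by
      have h2' : ((2 * NR.card : ℕ) : ℤ) = ((c + 1 : ℕ) : ℤ) := by rw [h2]
      push_cast at h2'
      linarith [h2', hc]
    have h4 := congrArg (fun z : ℤ => (z : ℚ)) h3
    push_cast at h4
    have h5 : 2 * (NR.card : ℚ) = ((a : ℚ) - 1) * ((b : ℚ) - 1) := by ring_nf; ring_nf at h4; linarith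
    linarith [h5]
end
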